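/- arXiv:0907.0975 — 5 statements merged into one kernel-verified Lean document; each statement's English description precedes it below -/
import Mathlib

section
/- Let X be a metric space, μ a regular σ-finite Borel measure, F: X → X a μ-preserving transformation, and f ∈ L²(μ). If f is continuous with compact support, then any weak limit g of a subsequence f∘F^{n_i} in L²(μ) is W^s-invariant: there is a full-measure set Ω such that for x, y ∈ Ω with d(F^n x, F^n y) → 0 one has g(x) = g(y). -/
open MeasureTheory Filter Topology Set Function

/-- Let `X` be a metric space, `μ` a regular σ-finite Borel measure, `F` a
`μ`-preserving transformation and `f` continuous with compact support (in `L²`).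
Then any weak limit `g` in `L²(μ)` of a subsequence `f ∘ F^{nᵢ}` is `Wˢ`-invariant:
there is a full-measure set `Ω` such that for `x, y ∈ Ω` with
`d(Fⁿ x, Fⁿ y) → 0` one has `g(x) = g(y)`. -/
theorem weak_limit_Ws_invariant_of_continuous {X : Type*} [MetricSpace X]
    [MeasurableSpace X] [BorelSpace X]
    (μ : Measure X) [SigmaFinite μ] [μ.Regular]
    (F : X → X) (hFmeas : Measurable F) (hmp : MeasurePreserving F μ μ)
    (f : X → ℝ) (hfc : Continuous f) (hfs : HasCompactSupport f)
    (g : Lp ℝ 2 μ) (n : ℕ → ℕ) (hn : StrictMono n)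
    (hweak : ∀ h : Lp ℝ 2 μ,
      Tendsto (fun i : ℕ => ∫ x, f (F^[n i] x) * (h : X → ℝ) x ∂μ) atTop
        (𝓝 (∫ x, (g : X → ℝ) x * (h : X → ℝ) x ∂μ))) :
    ∃ g₀ : X → ℝ, (g : X → ℝ) =ᵐ[μ] g₀ ∧
      ∃ Ω : Set X, μ Ωᶜ = 0 ∧
        ∀ x ∈ Ω, ∀ y ∈ Ω,
          Tendsto (fun k : ℕ => dist (F^[k] x) (F^[k] y)) atTop (𝓝 0) →
          g₀ x = g₀ y := by
  classical
  haveI : Fact ((1 : ENNReal) ≤ 2) := ⟨one_le_two⟩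
  have hfmem : MemLp f 2 μ := hfc.memLp_of_hasCompactSupport hfs
  set u : ℕ → X → ℝ := fun i x => f (F^[n i] x) with hu_def
  have humem : ∀ i, MemLp (u i) 2 μ := fun i =>
    hfmem.comp_measurePreserving (hmp.iterate (n i))
  set U : ℕ → Lp ℝ 2 μ := fun i => (humem i).toLp (u i) with hU_def
  have hUcoe : ∀ i, (U i : X → ℝ) =ᵐ[μ] u i := fun i => (humem i).coeFn_toLp
  -- inner products as integrals
  have hinner : ∀ v h : Lp ℝ 2 μ,
      @inner ℝ _ _ v h = ∫ x, (v : X → ℝ) x * (h : X → ℝ) x ∂μ := by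
    intro v h
    rw [L2.inner_def]
    refine integral_congr_ae ?_
    filter_upwards with x
    simp [RCLike.inner_apply, starRingEnd_apply, mul_comm]
  -- weak convergence in inner product form
  have hweak' : ∀ h : Lp ℝ 2 μ,
      Tendsto (fun i => @inner ℝ _ _ (U i) h) atTop (𝓝 (@inner ℝ _ _ g h)) := by
    intro h
    have h1 : ∀ i, @inner ℝ _ _ (U i) h = ∫ x, u i x * (h : X → ℝ) x ∂μ := by
      intro i
      rw [hinner]
      refine integral_congr_ae ?_
      filter_upwards [hUcoe i] with x hx
      rw [hx]
    rw [hinner]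
    simp only [h1]
    exact hweak h
  set w : ℕ → Lp ℝ 2 μ := fun i => U i - g with hw_def
  have hw0 : ∀ h : Lp ℝ 2 μ,
      Tendsto (fun i => @inner ℝ _ _ (w i) h) atTop (𝓝 0) := by
    intro h
    have h2 := (hweak' h).sub (tendsto_const_nhds (x := @inner ℝ _ _ g h))
    simp only [sub_self] at h2
    refine h2.congr fun i => ?_
    rw [hw_def]
    simp [inner_sub_left]
  -- uniform norm bound
  set M : ℝ := ‖hfmem.toLp f‖ + ‖g‖ with hM_def
  have hUnorm : ∀ i, ‖U i‖ = ‖hfmem.toLp f‖ := by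
    intro i
    rw [hU_def]
    simp only []
    rw [Lp.norm_toLp, Lp.norm_toLp]
    exact congrArg ENNReal.toReal
      (eLpNorm_comp_measurePreserving hfmem.aestronglyMeasurable (hmp.iterate (n i)))
  have hwM : ∀ i, ‖w i‖ ≤ M := by
    intro i
    rw [hw_def]
    exact (norm_sub_le _ _).trans (by rw [hUnorm i])
  have hM0 : 0 ≤ M := le_trans (norm_nonneg (w 0)) (hwM 0)
  -- Banach–Saks-type selection of a subsequence with small cross inner products
  have hsel : ∀ k m : ℕ, ∃ i, m < i ∧
      ∀ j ≤ m, |@inner ℝ _ _ (w j) (w i)| ≤ 1 / ((k : ℝ) + 1) := by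
    intro k m
    have hev : ∀ᶠ i in atTop, ∀ j ∈ Finset.range (m + 1),
        |@inner ℝ _ _ (w j) (w i)| ≤ 1 / ((k : ℝ) + 1) := by
      rw [eventually_all_finset]
      intro j _
      have h2 : Tendsto (fun i => |@inner ℝ _ _ (w j) (w i)|) atTop (𝓝 0) := by
        have := (hw0 (w j)).abs
        simpa [real_inner_comm] using this
      exact h2.eventually_le_const (by positivity)
    obtain ⟨i, hi⟩ := (hev.and (eventually_gt_atTop m)).exists
    exact ⟨i, hi.2, fun j hj => hi.1 j (Finset.mem_range.2 (Nat.lt_succ_of_le hj))⟩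
  choose step hstep1 hstep2 using hsel
  set φ : ℕ → ℕ := fun k => Nat.rec 0 (fun k ih => step k ih) k with hφ_def
  have hφ_succ : ∀ k, φ (k + 1) = step k (φ k) := fun k => rfl
  have hφmono : StrictMono φ := strictMono_nat_of_lt_succ fun k => by
    rw [hφ_succ]; exact hstep1 k (φ k)
  have hcross : ∀ j k, j ≤ k →
      |@inner ℝ _ _ (w (φ j)) (w (φ (k + 1)))| ≤ 1 / ((k : ℝ) + 1) := by
    intro j k hjk
    rw [hφ_succ]
    exact hstep2 k (φ k) (φ j) (hφmono.monotone hjk)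
  -- partial sums have norms of order sqrt k
  set S : ℕ → Lp ℝ 2 μ := fun k => ∑ j ∈ Finset.range (k + 1), w (φ j) with hS_def
  have hSnorm : ∀ k : ℕ, ‖S k‖ ^ 2 ≤ ((k : ℝ) + 1) * (M ^ 2 + 2) := by
    intro k
    induction k with
    | zero =>
      have h1 : S 0 = w (φ 0) := by rw [hS_def]; simp
      rw [h1]
      have := hwM (φ 0)
      have h2 := norm_nonneg (w (φ 0))
      push_cast
      nlinarith
    | succ k ih =>
      have hsum : S (k + 1) = S k + w (φ (k + 1)) := by
        rw [hS_def]
        exact Finset.sum_range_succ _ _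
      have hin : @inner ℝ _ _ (S k) (w (φ (k + 1))) ≤ 1 := by
        rw [hS_def, sum_inner]
        have h1 : ∑ j ∈ Finset.range (k + 1), @inner ℝ _ _ (w (φ j)) (w (φ (k + 1)))
            ≤ ∑ j ∈ Finset.range (k + 1), 1 / ((k : ℝ) + 1) := by
          refine Finset.sum_le_sum fun j hj => ?_
          exact (le_abs_self _).trans (hcross j k (Nat.lt_succ_iff.mp (Finset.mem_range.mp hj)))
        refine h1.trans ?_
        rw [Finset.sum_const, Finset.card_range, nsmul_eq_mul]
        rw [mul_one_div]
        have : ((k : ℝ) + 1) ≠ 0 := by positivity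
        push_cast
        rw [div_self this]
      have hexp : ‖S (k + 1)‖ ^ 2
          = ‖S k‖ ^ 2 + 2 * @inner ℝ _ _ (S k) (w (φ (k + 1))) + ‖w (φ (k + 1))‖ ^ 2 := by
        rw [hsum]
        exact norm_add_sq_real _ _
      have hw2 : ‖w (φ (k + 1))‖ ^ 2 ≤ M ^ 2 := by
        have := hwM (φ (k + 1))
        have h2 := norm_nonneg (w (φ (k + 1)))
        nlinarith
      rw [hexp]
      push_cast
      push_cast at ih
      nlinarith
  -- Cesàro averages converge to g in L²
  set A : ℕ → Lp ℝ 2 μ := fun k =>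
    ((k : ℝ) + 1)⁻¹ • ∑ j ∈ Finset.range (k + 1), U (φ j) with hA_def
  have hAg : ∀ k, A k - g = ((k : ℝ) + 1)⁻¹ • S k := by
    intro k
    have hne : ((k : ℝ) + 1) ≠ 0 := by positivity
    have h1 : S k = (∑ j ∈ Finset.range (k + 1), U (φ j)) - (k + 1 : ℕ) • g := by
      rw [hS_def, hw_def]
      simp [Finset.sum_sub_distrib]
    rw [h1, smul_sub, hA_def]
    have h2 : ((k : ℝ) + 1)⁻¹ • ((k + 1 : ℕ) • g) = g := by
      rw [← Nat.cast_smul_eq_nsmul ℝ, smul_smul]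
      push_cast
      rw [inv_mul_cancel₀ hne, one_smul]
    rw [h2]
  have hAnorm : ∀ k, ‖A k - g‖ ≤ Real.sqrt ((M ^ 2 + 2) / ((k : ℝ) + 1)) := by
    intro k
    have hc0 : (0 : ℝ) < (k : ℝ) + 1 := by positivity
    rw [hAg, norm_smul]
    have h1 : ‖S k‖ ≤ Real.sqrt (((k : ℝ) + 1) * (M ^ 2 + 2)) := by
      rw [← Real.sqrt_sq (norm_nonneg (S k))]
      exact Real.sqrt_le_sqrt (hSnorm k)
    have h2 : ‖((k : ℝ) + 1)⁻¹‖ = ((k : ℝ) + 1)⁻¹ := by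
      rw [Real.norm_eq_abs, abs_of_pos (by positivity)]
    rw [h2]
    have h3 : ((k : ℝ) + 1)⁻¹ * Real.sqrt (((k : ℝ) + 1) * (M ^ 2 + 2))
        = Real.sqrt ((M ^ 2 + 2) / ((k : ℝ) + 1)) := by
      rw [show (M ^ 2 + 2) / ((k : ℝ) + 1)
          = (((k : ℝ) + 1)⁻¹) ^ 2 * (((k : ℝ) + 1) * (M ^ 2 + 2)) by
        field_simp]
      rw [Real.sqrt_mul (sq_nonneg _), Real.sqrt_sq (by positivity)]
    rw [← h3]
    exact mul_le_mul_of_nonneg_left h1 (by positivity)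
  have hbnd : Tendsto (fun k : ℕ => Real.sqrt ((M ^ 2 + 2) / ((k : ℝ) + 1))) atTop (𝓝 0) := by
    have h1 : Tendsto (fun k : ℕ => (M ^ 2 + 2) / ((k : ℝ) + 1)) atTop (𝓝 0) := by
      have h2 := (tendsto_const_div_atTop_nhds_zero_nat (M ^ 2 + 2)).comp
        (tendsto_add_atTop_nat 1)
      refine h2.congr fun k => ?_
      show (M ^ 2 + 2) / ((k + 1 : ℕ) : ℝ) = (M ^ 2 + 2) / ((k : ℝ) + 1)
      push_cast
      ring
    have h3 := (Real.continuous_sqrt.tendsto' 0 0 Real.sqrt_zero).comp h1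
    exact h3
  have hAtend : Tendsto A atTop (𝓝 g) := by
    rw [tendsto_iff_norm_sub_tendsto_zero]
    exact squeeze_zero (fun k => norm_nonneg _) hAnorm hbnd
  -- pointwise averages
  set abar : ℕ → X → ℝ := fun k x =>
    ((k : ℝ) + 1)⁻¹ * ∑ j ∈ Finset.range (k + 1), u (φ j) x with habar_def
  have habarmeas : ∀ k, AEStronglyMeasurable (abar k) μ := by
    intro k
    refine Measurable.aestronglyMeasurable ?_
    exact (Finset.measurable_sum _ fun j _ =>
      hfc.measurable.comp (hFmeas.iterate (n (φ j)))).const_mul _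
  have hkey : ∀ s : Finset ℕ, ((∑ j ∈ s, U (φ j) : Lp ℝ 2 μ) : X → ℝ) =ᵐ[μ]
      fun x => ∑ j ∈ s, u (φ j) x := by
    intro s
    induction s using Finset.induction_on with
    | empty => simp only [Finset.sum_empty]; exact Lp.coeFn_zero (E := ℝ) (p := 2) (μ := μ)
    | insert _ _ hns ih =>
      rename_i a s'
      filter_upwards [Lp.coeFn_add (U (φ a)) (∑ j ∈ s', U (φ j)), hUcoe (φ a), ih] with x h1 h2 h3
      rw [Finset.sum_insert hns, Finset.sum_insert hns, h1]
      simp only [Pi.add_apply]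
      rw [h2, h3]
  have hAcoe : ∀ k, (A k : X → ℝ) =ᵐ[μ] abar k := by
    intro k
    filter_upwards [Lp.coeFn_smul (((k : ℝ) + 1)⁻¹) (∑ j ∈ Finset.range (k + 1), U (φ j)),
      hkey (Finset.range (k + 1))] with x h1 h2
    rw [hA_def]
    simp only []
    rw [h1]
    simp only [Pi.smul_apply, smul_eq_mul]
    rw [h2, habar_def]
  -- convergence in measure and a.e. convergent subsequence
  have heLp : Tendsto (fun k => eLpNorm (abar k - (g : X → ℝ)) 2 μ) atTop (𝓝 0) := by
    have h1 := (Lp.tendsto_Lp_iff_tendsto_eLpNorm' A g).mp hAtend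
    refine (tendsto_congr fun k => ?_).mp h1
    exact eLpNorm_congr_ae ((hAcoe k).sub (EventuallyEq.refl _ _))
  have hTIM : TendstoInMeasure μ abar atTop (g : X → ℝ) :=
    tendstoInMeasure_of_tendsto_eLpNorm (by norm_num) habarmeas
      (Lp.aestronglyMeasurable g) heLp
  obtain ⟨ψ, hψmono, hψae⟩ := hTIM.exists_seq_tendsto_ae
  refine ⟨fun x => limUnder atTop (fun m => abar (ψ m) x), ?_,
    {x | ∃ l : ℝ, Tendsto (fun m => abar (ψ m) x) atTop (𝓝 l)}, ?_, ?_⟩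
  · filter_upwards [hψae] with x hx
    exact hx.limUnder_eq.symm
  · refine measure_mono_null ?_ (ae_iff.mp hψae)
    intro x hx
    intro h
    exact hx ⟨_, h⟩
  · rintro x ⟨lx, hlx⟩ y ⟨ly, hly⟩ hst
    have hgx : limUnder atTop (fun m => abar (ψ m) x) = lx := hlx.limUnder_eq
    have hgy : limUnder atTop (fun m => abar (ψ m) y) = ly := hly.limUnder_eq
    simp only []
    rw [hgx, hgy]
    -- the difference of averages tends to 0 along the stable pair
    have hfu : UniformContinuous f :=
      hfc.uniformContinuous_of_tendsto_cocompact hfs.is_zero_at_infty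
    have hd : Tendsto (fun j => u (φ j) x - u (φ j) y) atTop (𝓝 0) := by
      rw [NormedAddCommGroup.tendsto_nhds_zero]
      intro ε hε
      obtain ⟨δ, hδ, hδ2⟩ := Metric.uniformContinuous_iff.mp hfu ε hε
      have h1 : Tendsto (fun j => dist (F^[n (φ j)] x) (F^[n (φ j)] y)) atTop (𝓝 0) :=
        hst.comp ((hn.comp hφmono).tendsto_atTop)
      filter_upwards [h1.eventually_lt_const hδ] with j hj
      have h2 := hδ2 hj
      rw [Real.dist_eq] at h2
      simpa [hu_def, Real.norm_eq_abs] using h2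
    have hc : Tendsto (fun k => abar k x - abar k y) atTop (𝓝 0) := by
      have h2 := hd.cesaro
      have h3 := h2.comp (tendsto_add_atTop_nat 1)
      refine h3.congr fun k => ?_
      simp only [Function.comp, habar_def]
      rw [Finset.sum_sub_distrib]
      push_cast
      ring
    have hxy : Tendsto (fun m => abar (ψ m) x - abar (ψ m) y) atTop (𝓝 (lx - ly)) :=
      hlx.sub hly
    have h0 : Tendsto (fun m => abar (ψ m) x - abar (ψ m) y) atTop (𝓝 0) :=
      hc.comp hψmono.tendsto_atTop
    exact sub_eq_zero.mp (tendsto_nhds_unique hxy h0)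
end

section
/- Let X be a metric space, μ a regular σ-finite Borel measure, F a μ-preserving transformation, and f ∈ L²(μ). Then any weak limit of a subsequence f∘F^{n_i} in L²(μ) is W^s-invariant. -/
open MeasureTheory Filter Topology Set Function Metric
open scoped ENNReal NNReal

theorem exists_lipschitz_approx {X : Type*} [MetricSpace X] [MeasurableSpace X] [BorelSpace X]
    (μ : Measure X) [μ.Regular] {f : X → ℝ} (hf : MemLp f 2 μ) {ε : ℝ≥0∞} (hε : ε ≠ 0) :
    ∃ φ : X → ℝ, eLpNorm (f - φ) 2 μ ≤ ε ∧ (∃ L, LipschitzWith L φ) ∧ MemLp φ 2 μ := by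
  have h2 : (2 : ℝ≥0∞) ≠ ∞ := by norm_num
  have h0 : (2 : ℝ≥0∞) ≠ 0 := by norm_num
  have key : ∀ (c : ℝ) ⦃s : Set X⦄, MeasurableSet s → μ s < ∞ → ∀ {ε : ℝ≥0∞}, ε ≠ 0 →
      ∃ g : X → ℝ, eLpNorm (g - s.indicator fun _ => c) 2 μ ≤ ε ∧
        ((∃ L, LipschitzWith L g) ∧ MemLp g 2 μ) := by
    intro c s hs hsfin ε hε
    set M : ℝ≥0∞ := ((2 * ‖c‖₊ + 1 : ℝ≥0) : ℝ≥0∞)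
    have hM0 : M ≠ 0 := by simp [M]
    have hMtop : M ≠ ∞ := ENNReal.coe_ne_top
    set m : ℝ≥0∞ := min 1 (ε / M) with hm
    have hmne : m ≠ 0 :=
      (lt_min one_pos (ENNReal.div_pos hε hMtop)).ne' 
    have hm0 : m ≠ 0 := hmne
    have hMm : M * m ≤ ε := by
      calc M * m ≤ M * (ε / M) := by gcongr; exact min_le_right _ _
      _ ≤ ε := ENNReal.mul_div_le
    have hθ : m * m ≠ 0 := by simp [hm0]
    -- compact inside, open outside
    obtain ⟨K, hKs, hKcomp, hKlt⟩ := hs.exists_isCompact_lt_add hsfin.ne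
      (ε := m * m / 2) (by simp [hθ, ENNReal.div_eq_zero_iff])
    obtain ⟨U, hsU, hUopen, hUlt⟩ := s.exists_isOpen_lt_add hsfin.ne
      (ε := m * m / 2) (by simp [hθ, ENNReal.div_eq_zero_iff])
    have hKU : K ⊆ U := hKs.trans hsU
    have hUK : μ (U \ K) < m * m := by
      have h1 : μ (U \ s) < m * m / 2 :=
        measure_diff_lt_of_lt_add hs.nullMeasurableSet hsU hsfin.ne hUlt
      have h2' : μ (s \ K) < m * m / 2 :=
        measure_diff_lt_of_lt_add (hKcomp.isClosed.measurableSet).nullMeasurableSet hKs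
          ((measure_mono hKs).trans_lt hsfin).ne hKlt
      have : μ (U \ K) ≤ μ (U \ s) + μ (s \ K) := by
        refine (measure_mono ?_).trans (measure_union_le _ _)
        intro x hx
        by_cases h : x ∈ s
        · exact Or.inr ⟨h, hx.2⟩
        · exact Or.inl ⟨hx.1, h⟩
      calc μ (U \ K) ≤ μ (U \ s) + μ (s \ K) := this
        _ < m * m / 2 + m * m / 2 := ENNReal.add_lt_add h1 h2'
        _ = m * m := ENNReal.add_halves _
    have hUKpow : μ (U \ K) ^ (1 / (2:ℝ)) ≤ m := by
      have := ENNReal.rpow_le_rpow hUK.le (by norm_num : (0:ℝ) ≤ 1/2)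
      calc μ (U \ K) ^ (1 / (2:ℝ)) ≤ (m * m) ^ (1 / (2:ℝ)) := this
        _ = m := by
          have hmm : m * m = m ^ (2:ℝ) := by
            rw [show ((2:ℝ)) = ((2:ℕ):ℝ) by norm_num, ENNReal.rpow_natCast]; ring
          rw [hmm, ← ENNReal.rpow_mul]; norm_num
    have hcM : (‖c‖₊ : ℝ≥0∞) ≤ M := by
      simp only [M, ENNReal.coe_le_coe]
      calc ‖c‖₊ ≤ 2 * ‖c‖₊ := by
            rw [two_mul]; exact le_add_self
        _ ≤ 2 * ‖c‖₊ + 1 := le_self_add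
    rcases K.eq_empty_or_nonempty with hKemp | hKne
    · refine ⟨0, ?_, ⟨0, LipschitzWith.const' 0⟩, MemLp.zero⟩
      rw [zero_sub, eLpNorm_neg, eLpNorm_indicator_const hs h0 h2]
      have hsUK : μ s ≤ μ (U \ K) := by
        rw [hKemp, diff_empty]; exact measure_mono hsU
      calc (‖c‖₊ : ℝ≥0∞) * μ s ^ (1 / (2:ℝ≥0∞).toReal) ≤ M * m := by
            refine mul_le_mul' hcM ?_
            refine le_trans ?_ hUKpow
            refine ENNReal.rpow_le_rpow hsUK (by norm_num)
        _ ≤ ε := hMm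
    · obtain ⟨δ, hδ, hthick⟩ := hKcomp.exists_thickening_subset_open hUopen hKU
      set g : X → ℝ := fun x => c * max (1 - infDist x K / δ) 0 with hg
      have hgK : ∀ x ∈ K, g x = c := by
        intro x hx
        simp [hg, infDist_zero_of_mem hx]
      have hgout : ∀ x, x ∉ thickening δ K → g x = 0 := by
        intro x hx
        have hge : δ ≤ infDist x K := by
          by_contra hlt
          push_neg at hlt
          exact hx ((mem_thickening_iff_infDist_lt hKne).2 hlt)
        have h1 : 1 - infDist x K / δ ≤ 0 := by
          rw [sub_nonpos]
          rw [← div_self hδ.ne']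
          gcongr
        simp [hg, max_eq_right h1]
      have hgbd : ∀ x, ‖g x‖ ≤ |c| := by
        intro x
        have h1 : max (1 - infDist x K / δ) 0 ≤ 1 := by
          apply max_le _ zero_le_one
          have : 0 ≤ infDist x K / δ := div_nonneg infDist_nonneg hδ.le
          linarith
        have h2' : 0 ≤ max (1 - infDist x K / δ) 0 := le_max_right _ _
        rw [hg]
        simp only [Real.norm_eq_abs, abs_mul]
        calc |c| * |max (1 - infDist x K / δ) 0| ≤ |c| * 1 := by
              rw [abs_of_nonneg h2']; exact mul_le_mul_of_nonneg_left h1 (abs_nonneg c)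
          _ = |c| := mul_one _
      have hLip : ∃ L, LipschitzWith L g := by
        refine ⟨‖c‖₊ * (Real.toNNReal δ)⁻¹, LipschitzWith.of_dist_le_mul fun x y => ?_⟩
        have key : dist (g x) (g y) ≤ |c| / δ * dist x y := by
          rw [hg]
          simp only [Real.dist_eq]
          rw [← mul_sub, abs_mul]
          have h1 : |max (1 - infDist x K / δ) 0 - max (1 - infDist y K / δ) 0|
              ≤ |infDist x K - infDist y K| / δ := by
            calc _ ≤ |(1 - infDist x K / δ) - (1 - infDist y K / δ)| :=
                  abs_max_sub_max_le_abs _ _ _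
              _ = |infDist x K - infDist y K| / δ := by
                  rw [show (1 - infDist x K / δ) - (1 - infDist y K / δ)
                      = (infDist y K - infDist x K)/δ by ring,
                    abs_div, abs_of_pos hδ, abs_sub_comm]
          have h2' : |infDist x K - infDist y K| ≤ dist x y := by
            have := (lipschitz_infDist_pt K).dist_le_mul x y
            simp only [NNReal.coe_one, one_mul] at this
            rwa [Real.dist_eq] at this
          calc |c| * |max (1 - infDist x K / δ) 0 - max (1 - infDist y K / δ) 0|
              ≤ |c| * (|infDist x K - infDist y K| / δ) :=
                mul_le_mul_of_nonneg_left h1 (abs_nonneg c)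
            _ ≤ |c| * (dist x y / δ) := by
                gcongr
            _ = |c| / δ * dist x y := by ring
        refine key.trans (le_of_eq ?_)
        congr 1
        rw [NNReal.coe_mul, NNReal.coe_inv, Real.coe_toNNReal δ hδ.le, coe_nnnorm,
          Real.norm_eq_abs, div_eq_mul_inv]
      have hmemg : MemLp g 2 μ := by
        refine ⟨(hLip.choose_spec.continuous).aestronglyMeasurable, ?_⟩
        have hb : ∀ x, ‖g x‖ ≤ ‖U.indicator (fun _ => |c|) x‖ := by
          intro x
          by_cases hx : x ∈ U
          · rw [indicator_of_mem hx]
            simpa using hgbd x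
          · rw [indicator_of_notMem hx]
            have : g x = 0 := hgout x (fun h => hx (hthick h))
            simp [this]
        calc eLpNorm g 2 μ ≤ eLpNorm (U.indicator fun _ => |c|) 2 μ := eLpNorm_mono hb
          _ = ‖|c|‖₊ * μ U ^ (1 / (2:ℝ≥0∞).toReal) :=
              eLpNorm_indicator_const hUopen.measurableSet h0 h2
          _ < ∞ := by
              have hmm1 : m * m ≤ 1 := by
                calc m * m ≤ 1 * 1 := mul_le_mul' (min_le_left _ _) (min_le_left _ _)
                  _ = 1 := one_mul 1
              have hμU : μ U ≠ ∞ := by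
                have h3 : μ s + m * m / 2 < ∞ := ENNReal.add_lt_top.2 ⟨hsfin,
                  lt_of_le_of_lt (le_trans (ENNReal.half_le_self) hmm1) ENNReal.one_lt_top⟩
                exact (hUlt.trans h3).ne
              apply ENNReal.mul_lt_top ENNReal.coe_lt_top
              exact ENNReal.rpow_lt_top_of_nonneg (by norm_num) hμU
      refine ⟨g, ?_, hLip, hmemg⟩
      have hbd : ∀ x, ‖g x - s.indicator (fun _ => c) x‖ ≤
          ‖(U \ K).indicator (fun _ => (2*|c| : ℝ)) x‖ := by
        intro x
        by_cases hxK : x ∈ K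
        · rw [hgK x hxK, indicator_of_mem (hKs hxK)]
          simp only [sub_self, norm_zero]
          positivity
        · by_cases hxU : x ∈ U
          · rw [indicator_of_mem (show x ∈ U \ K from ⟨hxU, hxK⟩)]
            have h1 : ‖s.indicator (fun _ => c) x‖ ≤ |c| := by
              by_cases hxs : x ∈ s
              · rw [indicator_of_mem hxs]
                exact le_of_eq (Real.norm_eq_abs c)
              · rw [indicator_of_notMem hxs]
                rw [norm_zero]
                positivity
            calc ‖g x - s.indicator (fun _ => c) x‖ ≤ ‖g x‖ + ‖s.indicator (fun _ => c) x‖ :=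
                  norm_sub_le _ _
              _ ≤ |c| + |c| := add_le_add (hgbd x) h1
              _ ≤ ‖(2*|c| : ℝ)‖ := by
                  rw [Real.norm_eq_abs, abs_of_nonneg (by positivity : (0:ℝ) ≤ 2*|c|)]
                  linarith
          · have hg0 : g x = 0 := hgout x (fun h => hxU (hthick h))
            rw [indicator_of_notMem (fun hxUK : x ∈ U \ K => hxU hxUK.1),
              indicator_of_notMem (fun hxs => hxU (hsU hxs)), hg0]
            simp
      calc eLpNorm (g - s.indicator fun _ => c) 2 μ
          ≤ eLpNorm ((U \ K).indicator fun _ => (2*|c| : ℝ)) 2 μ := eLpNorm_mono hbd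
        _ = ‖(2*|c| : ℝ)‖₊ * μ (U \ K) ^ (1 / (2:ℝ≥0∞).toReal) :=
            eLpNorm_indicator_const (hUopen.measurableSet.diff hKcomp.isClosed.measurableSet) h0 h2
        _ ≤ M * m := by
            refine mul_le_mul' ?_ (by simpa using hUKpow)
            simp only [M, ENNReal.coe_le_coe]
            have h22 : ‖(2*|c| : ℝ)‖₊ = 2 * ‖c‖₊ := by
              ext
              simp [Real.nnnorm_abs, abs_mul, abs_of_nonneg, abs_abs]
            rw [h22]
            exact le_self_add
        _ ≤ ε := hMm
  exact hf.induction_dense h2 (fun φ => (∃ L, LipschitzWith L φ) ∧ MemLp φ 2 μ) key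
    (fun a b ha hb => ⟨⟨ha.1.choose + hb.1.choose, ha.1.choose_spec.add hb.1.choose_spec⟩,
      ha.2.add hb.2⟩)
    (fun a ha => ha.2.aestronglyMeasurable) hε

theorem exists_mem_iInter_of_dist_le {H : Type*} [NormedAddCommGroup H] [InnerProductSpace ℝ H]
    [CompleteSpace H] (E : ℕ → Set H) (hconv : ∀ N, Convex ℝ (E N))
    (hclosed : ∀ N, IsClosed (E N)) (hanti : ∀ N M, N ≤ M → E M ⊆ E N)
    (hne : ∀ N, (E N).Nonempty) (g : H) {ε : ℝ}
    (hdist : ∀ N, Metric.infDist g (E N) ≤ ε) :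
    ∃ ψ : H, (∀ N, ψ ∈ E N) ∧ ‖ψ - g‖ ≤ ε := by
  set dseq : ℕ → ℝ := fun N => Metric.infDist g (E N) with hdseq
  have hmono : Monotone dseq := by
    intro N M hNM
    exact infDist_le_infDist_of_subset (hanti N M hNM) (hne M)
  have hbddA : BddAbove (range dseq) := ⟨ε, by rintro _ ⟨N, rfl⟩; exact hdist N⟩
  set dd : ℝ := ⨆ N, dseq N with hdd
  have hddle : dd ≤ ε := ciSup_le hdist
  have hddge : ∀ N, dseq N ≤ dd := fun N => le_ciSup hbddA N
  have hdd0 : 0 ≤ dd := le_trans infDist_nonneg (hddge 0)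
  have htend : Tendsto dseq atTop (𝓝 dd) := tendsto_atTop_ciSup hmono hbddA
  have hq : ∀ N, ∃ y ∈ E N, dist g y < dseq N + 1/(N+1) := by
    intro N
    exact (Metric.infDist_lt_iff (hne N)).1 (lt_add_of_pos_right _ (by positivity))
  choose q hqmem hqd using hq
  -- key parallelogram estimate
  have hkey : ∀ N M, N ≤ M →
      dist (q N) (q M) ^ 2 ≤ 2 * dist g (q N) ^ 2 + 2 * dist g (q M) ^ 2 - 4 * dseq N ^ 2 := by
    intro N M hNM
    have hpar := parallelogram_law_with_norm ℝ (g - q N) (g - q M)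
    have hmid : ((1:ℝ)/2) • q N + ((1:ℝ)/2) • q M ∈ E N := by
      refine (hconv N) (hqmem N) (hanti N M hNM (hqmem M)) (by norm_num) (by norm_num) (by norm_num)
    have h1 : dseq N ≤ ‖g - (((1:ℝ)/2) • q N + ((1:ℝ)/2) • q M)‖ := by
      rw [← dist_eq_norm]
      exact Metric.infDist_le_dist_of_mem hmid
    have h2 : (g - q N) + (g - q M) = (2:ℝ) • (g - (((1:ℝ)/2) • q N + ((1:ℝ)/2) • q M)) := by
      module
    have h3 : ‖(g - q N) + (g - q M)‖ = 2 * ‖g - (((1:ℝ)/2) • q N + ((1:ℝ)/2) • q M)‖ := by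
      rw [h2, norm_smul]
      norm_num
    have h4 : ‖(g - q N) - (g - q M)‖ = dist (q N) (q M) := by
      rw [show (g - q N) - (g - q M) = q M - q N by abel, ← dist_eq_norm, dist_comm]
    have h5 : ‖g - q N‖ = dist g (q N) := (dist_eq_norm _ _).symm
    have h6 : ‖g - q M‖ = dist g (q M) := (dist_eq_norm _ _).symm
    have h7 : 2 * dseq N ≤ ‖(g - q N) + (g - q M)‖ := by rw [h3]; linarith
    have hd0 : 0 ≤ dseq N := infDist_nonneg
    have h8 : (2 * dseq N)*(2 * dseq N) ≤
        ‖(g - q N) + (g - q M)‖ * ‖(g - q N) + (g - q M)‖ :=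
      mul_self_le_mul_self (by linarith) h7
    rw [h4, h5, h6] at hpar
    nlinarith [hpar, h8]
  have hcauchy : CauchySeq q := by
    rw [Metric.cauchySeq_iff]
    intro e he
    set δ : ℝ := min 1 (e^2 / (17 * (dd + 1))) with hδdef
    have hδpos : 0 < δ := lt_min one_pos (by positivity)
    obtain ⟨N₁, hN₁⟩ := (htend.eventually (eventually_ge_nhds
      (show dd - δ/2 < dd by linarith))).exists_forall_of_atTop
    obtain ⟨N₂, hN₂⟩ := (tendsto_one_div_add_atTop_nhds_zero_nat.eventually
      (eventually_le_nhds (half_pos hδpos))).exists_forall_of_atTop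
    have hδ1 : δ ≤ 1 := min_le_left _ _
    have hδe : δ ≤ e^2 / (17 * (dd + 1)) := min_le_right _ _
    have hb : ∀ N M, max N₁ N₂ ≤ N → max N₁ N₂ ≤ M → N ≤ M → dist (q N) (q M) < e := by
      intro N M hN hM hNM
      have hN1 : N₁ ≤ N := le_trans (le_max_left _ _) hN
      have hN2 : N₂ ≤ N := le_trans (le_max_right _ _) hN
      have hM2 : N₂ ≤ M := le_trans (le_max_right _ _) hM
      have e1 : dist g (q N) ≤ dd + δ := by
        have := hN₂ N hN2
        have := hddge N
        have := (hqd N).le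
        linarith
      have e2 : dist g (q M) ≤ dd + δ := by
        have := hN₂ M hM2
        have := hddge M
        have := (hqd M).le
        linarith
      have e3 : dd - δ/2 ≤ dseq N := hN₁ N hN1
      have hd0 : (0:ℝ) ≤ dseq N := infDist_nonneg
      have e1' : dist g (q N)^2 ≤ (dd+δ)^2 := by
        rw [pow_two, pow_two]; exact mul_self_le_mul_self dist_nonneg e1
      have e2' : dist g (q M)^2 ≤ (dd+δ)^2 := by
        rw [pow_two, pow_two]; exact mul_self_le_mul_self dist_nonneg e2
      have hkNM := hkey N M hNM
      have hδsq : δ^2 ≤ δ := by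
        rw [pow_two]; exact mul_le_of_le_one_left hδpos.le hδ1
      have hdistsq : dist (q N) (q M)^2 ≤ 16*(dd+1)*δ := by
        rcases le_or_gt (δ/2) dd with hc | hc
        · have h5 : (dd - δ/2)^2 ≤ dseq N^2 := by
            rw [pow_two, pow_two]; exact mul_self_le_mul_self (by linarith) e3
          have h6 : dist (q N) (q M)^2 ≤ 4*(dd+δ)^2 - 4*(dd-δ/2)^2 := by
            linarith
          have h7 : 4*(dd+δ)^2 - 4*(dd-δ/2)^2 = 12*dd*δ + 3*δ^2 := by ring
          have h8 : (0:ℝ) ≤ dd*δ := mul_nonneg hdd0 hδpos.le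
          linarith
        · have h6 : dist (q N) (q M)^2 ≤ 4*(dd+δ)^2 := by
            linarith [sq_nonneg (dseq N)]
          have h7 : (dd+δ)^2 ≤ (3*δ/2)^2 := by
            rw [pow_two, pow_two]; exact mul_self_le_mul_self (by linarith) (by linarith)
          have h7' : (3*δ/2)^2 = 9/4*δ^2 := by ring
          have h8 : (0:ℝ) ≤ dd*δ := mul_nonneg hdd0 hδpos.le
          linarith
      have h9 : 16*(dd+1)*δ ≤ 16/17 * e^2 := by
        have h10 : 16*(dd+1)*δ ≤ 16*(dd+1) * (e^2/(17*(dd+1))) := by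
          refine mul_le_mul_of_nonneg_left hδe (by positivity)
        have h11 : 16*(dd+1) * (e^2/(17*(dd+1))) = 16/17 * e^2 := by
          field_simp
        linarith
      by_contra hcon
      push_neg at hcon
      have h12 : e^2 ≤ dist (q N) (q M)^2 := by
        rw [pow_two, pow_two]; exact mul_self_le_mul_self he.le hcon
      have h13 : 0 < e^2 := pow_pos he 2
      linarith
    refine ⟨max N₁ N₂, fun N hN M hM => ?_⟩
    rcases le_total N M with h | h
    · exact hb N M hN hM h
    · rw [dist_comm]; exact hb M N hM hN h
  obtain ⟨ψ, hψ⟩ := cauchySeq_tendsto_of_complete hcauchy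
  refine ⟨ψ, fun N => ?_, ?_⟩
  · refine (hclosed N).mem_of_tendsto hψ ?_
    filter_upwards [eventually_ge_atTop N] with M hM using hanti N M hM (hqmem M)
  · have hd : Tendsto (fun M => dist g (q M)) atTop (𝓝 (dist g ψ)) :=
      Tendsto.dist tendsto_const_nhds hψ
    have h2 : Tendsto (fun M : ℕ => dseq M + 1/(M+1:ℝ)) atTop (𝓝 (dd + 0)) :=
      htend.add tendsto_one_div_add_atTop_nhds_zero_nat
    have h3 : dist g ψ ≤ dd + 0 :=
      le_of_tendsto_of_tendsto' hd h2 (fun M => (hqd M).le)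
    rw [← dist_eq_norm, dist_comm]
    linarith

theorem convexHull_transfer {H : Type*} [NormedAddCommGroup H] [NormedSpace ℝ H]
    {a b : ℕ → H} {r : ℝ} (hab : ∀ j, ‖b j - a j‖ ≤ r) {s : Set ℕ} {v : H}
    (hv : v ∈ convexHull ℝ (a '' s)) :
    ∃ u ∈ convexHull ℝ (b '' s), ‖u - v‖ ≤ r := by
  rw [convexHull_eq] at hv
  obtain ⟨ι, t, w, z, hw0, hw1, hz, hcm⟩ := hv
  have hex : ∀ i ∈ t, ∃ j ∈ s, a j = z i := fun i hi => by
    obtain ⟨j, hj, hja⟩ := hz i hi; exact ⟨j, hj, hja⟩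
  choose! jj hjs hja using hex
  refine ⟨∑ i ∈ t, w i • b (jj i), ?_, ?_⟩
  · have := t.centerMass_mem_convexHull hw0 (by rw [hw1]; norm_num)
      (fun i hi => mem_image_of_mem b (hjs i hi) : ∀ i ∈ t, b (jj i) ∈ b '' s)
    rwa [t.centerMass_eq_of_sum_1 _ hw1] at this
  · have hv' : v = ∑ i ∈ t, w i • a (jj i) := by
      rw [← hcm, t.centerMass_eq_of_sum_1 _ hw1]
      exact Finset.sum_congr rfl fun i hi => by rw [hja i hi]
    rw [hv', ← Finset.sum_sub_distrib]
    calc ‖∑ i ∈ t, (w i • b (jj i) - w i • a (jj i))‖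
        ≤ ∑ i ∈ t, ‖w i • b (jj i) - w i • a (jj i)‖ := norm_sum_le _ _
      _ ≤ ∑ i ∈ t, w i * r := by
          refine Finset.sum_le_sum fun i hi => ?_
          rw [← smul_sub, norm_smul, Real.norm_eq_abs, abs_of_nonneg (hw0 i hi)]
          exact mul_le_mul_of_nonneg_left (hab (jj i)) (hw0 i hi)
      _ = r := by rw [← Finset.sum_mul, hw1, one_mul]

theorem Lp_coeFn_finset_sum {X : Type*} [MeasurableSpace X] {μ : Measure X}
    {ι : Type} (t : Finset ι) (w : ι → ℝ) (v : ι → Lp ℝ 2 μ) :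
    (((∑ i ∈ t, w i • v i : Lp ℝ 2 μ) : Lp ℝ 2 μ) : X → ℝ) =ᵐ[μ]
      fun x => ∑ i ∈ t, w i * (v i : X → ℝ) x := by
  classical
  induction t using Finset.induction_on with
  | empty => simp only [Finset.sum_empty]; exact Lp.coeFn_zero (E := ℝ) (p := 2) (μ := μ)
  | insert i t hnotmem ih =>
    rw [Finset.sum_insert hnotmem]
    filter_upwards [Lp.coeFn_add (w i • v i) (∑ j ∈ t, w j • v j),
      Lp.coeFn_smul (w i) (v i), ih] with x h1 h2 h3
    rw [h1]
    simp only [Pi.add_apply, Finset.sum_insert hnotmem, h2, h3]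
    simp [Pi.smul_apply, smul_eq_mul]

open MeasureTheory Filter Topology Set Function Metric
open scoped ENNReal NNReal



theorem pointwise_invariance {X : Type*} [MetricSpace X] [MeasurableSpace X] [BorelSpace X]
    {μ : Measure X} {F : X → X} {n : ℕ → ℕ} (hn : StrictMono n)
    (hFn : ∀ j : ℕ, MeasurePreserving (F^[j]) μ μ)
    {φ : X → ℝ} {L : ℝ≥0} (hL : LipschitzWith L φ) (hφ : MemLp φ 2 μ)
    (ψ : Lp ℝ 2 μ)
    (hmem : ∀ N : ℕ, ψ ∈ closure (convexHull ℝ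
      ((fun j => ((hφ.comp_measurePreserving (hFn (n j))).toLp (φ ∘ F^[n j]))) '' Ici N))) :
    ∃ Ω : Set X, μ Ωᶜ = 0 ∧ ∀ x ∈ Ω, ∀ y ∈ Ω,
      Tendsto (fun m : ℕ => dist (F^[m] x) (F^[m] y)) atTop (𝓝 0) →
      (ψ : X → ℝ) x = (ψ : X → ℝ) y := by
  classical
  set A : ℕ → Lp ℝ 2 μ :=
    fun j => ((hφ.comp_measurePreserving (hFn (n j))).toLp (φ ∘ F^[n j])) with hA
  -- representation of convex hull elements by honest functions
  have rep : ∀ (N : ℕ) (v : Lp ℝ 2 μ), v ∈ convexHull ℝ (A '' Ici N) →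
      ∃ u : X → ℝ, u =ᵐ[μ] (v : X → ℝ) ∧
        ∀ (x y : X) (e : ℝ), 0 ≤ e → (∀ m, N ≤ m → dist (F^[m] x) (F^[m] y) ≤ e) →
          |u x - u y| ≤ L * e := by
    intro N v hv
    rw [convexHull_eq] at hv
    obtain ⟨ι, t, w, z, hw0, hw1, hz, hcm⟩ := hv
    choose! jj hjs hja using fun i (hi : i ∈ t) => hz i hi
    refine ⟨fun x => ∑ i ∈ t, w i * φ (F^[n (jj i)] x), ?_, ?_⟩
    · have hv' : v = ∑ i ∈ t, w i • A (jj i) := by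
        rw [← hcm, t.centerMass_eq_of_sum_1 _ hw1]
        exact Finset.sum_congr rfl fun i hi => by rw [hja i hi]
      rw [hv']
      have h1 := Lp_coeFn_finset_sum t w (fun i => A (jj i))
      have h2 : ∀ᵐ x ∂μ, ∀ i ∈ t, (A (jj i) : X → ℝ) x = (φ ∘ F^[n (jj i)]) x := by
        rw [Filter.eventually_all_finset]
        intro i _
        exact MemLp.coeFn_toLp _
      filter_upwards [h1, h2] with x hx1 hx2
      rw [hx1]
      exact Finset.sum_congr rfl fun i hi => by rw [hx2 i hi]; rfl
    · intro x y e he hbd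
      have hstep : ∀ i ∈ t,
          |w i * φ (F^[n (jj i)] x) - w i * φ (F^[n (jj i)] y)| ≤ w i * ((L:ℝ) * e) := by
        intro i hi
        rw [← mul_sub, abs_mul, abs_of_nonneg (hw0 i hi)]
        refine mul_le_mul_of_nonneg_left ?_ (hw0 i hi)
        have h3 : dist (φ (F^[n (jj i)] x)) (φ (F^[n (jj i)] y))
            ≤ L * dist (F^[n (jj i)] x) (F^[n (jj i)] y) := hL.dist_le_mul _ _
        have h4 : dist (F^[n (jj i)] x) (F^[n (jj i)] y) ≤ e := by
          refine hbd _ (le_trans (le_trans (hjs i hi) hn.le_apply) le_rfl)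
        rw [Real.dist_eq] at h3
        calc |φ (F^[n (jj i)] x) - φ (F^[n (jj i)] y)|
            ≤ L * dist (F^[n (jj i)] x) (F^[n (jj i)] y) := h3
          _ ≤ L * e := mul_le_mul_of_nonneg_left h4 L.coe_nonneg
      calc |∑ i ∈ t, w i * φ (F^[n (jj i)] x) - ∑ i ∈ t, w i * φ (F^[n (jj i)] y)|
          = |∑ i ∈ t, (w i * φ (F^[n (jj i)] x) - w i * φ (F^[n (jj i)] y))| := by
            rw [Finset.sum_sub_distrib]
        _ ≤ ∑ i ∈ t, |w i * φ (F^[n (jj i)] x) - w i * φ (F^[n (jj i)] y)| :=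
            Finset.abs_sum_le_sum_abs _ _
        _ ≤ ∑ i ∈ t, w i * ((L:ℝ) * e) := Finset.sum_le_sum hstep
        _ = (L:ℝ) * e := by rw [← Finset.sum_mul, hw1, one_mul]
  -- choose approximating sequence
  have hu : ∀ N : ℕ, ∃ u : X → ℝ, AEStronglyMeasurable u μ ∧
      eLpNorm (u - (ψ : X → ℝ)) 2 μ ≤ ENNReal.ofReal (1/(N+1)) ∧
      ∀ (x y : X) (e : ℝ), 0 ≤ e → (∀ m, N ≤ m → dist (F^[m] x) (F^[m] y) ≤ e) →
        |u x - u y| ≤ L * e := by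
    intro N
    obtain ⟨v, hvmem, hvdist⟩ := Metric.mem_closure_iff.1 (hmem N) (1/(N+1)) (by positivity)
    obtain ⟨u, huae, hulip⟩ := rep N v hvmem
    refine ⟨u, (Lp.aestronglyMeasurable v).congr huae.symm, ?_, hulip⟩
    have h1 : eLpNorm (u - (ψ : X → ℝ)) 2 μ = eLpNorm ((v - ψ : Lp ℝ 2 μ) : X → ℝ) 2 μ := by
      refine eLpNorm_congr_ae ?_
      filter_upwards [huae, Lp.coeFn_sub v ψ] with x hx1 hx2
      rw [Pi.sub_apply, hx1, hx2, Pi.sub_apply]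
    rw [h1]
    have h2 : eLpNorm ((v - ψ : Lp ℝ 2 μ) : X → ℝ) 2 μ = ENNReal.ofReal ‖v - ψ‖ := by
      rw [Lp.norm_def, ENNReal.ofReal_toReal (Lp.eLpNorm_ne_top _)]
    rw [h2]
    refine ENNReal.ofReal_le_ofReal ?_
    rw [← dist_eq_norm]
    rw [dist_comm]
    exact hvdist.le
  choose u humeas hunorm hulip using hu
  -- convergence in measure and a.e. subsequence
  have htend : Tendsto (fun N => eLpNorm (u N - (ψ : X → ℝ)) 2 μ) atTop (𝓝 0) := by
    refine tendsto_of_tendsto_of_tendsto_of_le_of_le (tendsto_const_nhds) ?_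
      (fun N => zero_le) hunorm
    rw [show (0:ℝ≥0∞) = ENNReal.ofReal 0 by simp]
    exact ENNReal.tendsto_ofReal tendsto_one_div_add_atTop_nhds_zero_nat
  have hmeasconv : TendstoInMeasure μ u atTop (ψ : X → ℝ) :=
    tendstoInMeasure_of_tendsto_eLpNorm_of_ne_top (by norm_num) (by norm_num)
      humeas (Lp.aestronglyMeasurable ψ) htend
  obtain ⟨ns, hnsmono, hae⟩ := hmeasconv.exists_seq_tendsto_ae
  refine ⟨{x | Tendsto (fun r => u (ns r) x) atTop (𝓝 ((ψ : X → ℝ) x))}, ?_, ?_⟩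
  · have := ae_iff.1 hae
    simpa [Set.compl_setOf] using this
  · intro x hx y hy hxy
    have key : ∀ e : ℝ, 0 < e → |(ψ : X → ℝ) x - (ψ : X → ℝ) y| ≤ L * e := by
      intro e he
      obtain ⟨N₀, hN₀⟩ := (hxy.eventually (eventually_le_nhds he)).exists_forall_of_atTop
      have habs : Tendsto (fun r => |u (ns r) x - u (ns r) y|) atTop
          (𝓝 |(ψ : X → ℝ) x - (ψ : X → ℝ) y|) := ((hx.sub hy).abs)
      refine le_of_tendsto habs ?_
      filter_upwards [eventually_ge_atTop N₀] with r hr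
      refine hulip (ns r) x y e he.le fun m hm => ?_
      have hd0 : dist (F^[m] x) (F^[m] y) ≤ e :=
        hN₀ m (le_trans (le_trans hr hnsmono.le_apply) hm)
      exact hd0
    have h0 : |(ψ : X → ℝ) x - (ψ : X → ℝ) y| ≤ 0 := by
      by_contra hcon
      push_neg at hcon
      have := key (|(ψ : X → ℝ) x - (ψ : X → ℝ) y| / (2 * ((L:ℝ) + 1)))
        (by positivity)
      have hL1 : (L:ℝ) ≤ (L:ℝ) + 1 := by linarith
      set c := |(ψ : X → ℝ) x - (ψ : X → ℝ) y| with hc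
      have hLpos : (0:ℝ) ≤ (L:ℝ) := L.coe_nonneg
      have h2 : (L:ℝ) * (c / (2 * ((L:ℝ) + 1))) ≤ c / 2 := by
        have key2 : (L:ℝ) * c ≤ ((L:ℝ)+1) * c := by nlinarith
        calc (L:ℝ) * (c / (2*((L:ℝ)+1))) = ((L:ℝ) * c) / (2*((L:ℝ)+1)) := by ring
          _ ≤ (((L:ℝ)+1) * c) / (2*((L:ℝ)+1)) := by gcongr
          _ = c / 2 := by
              have hne : ((L:ℝ)+1) ≠ 0 := by positivity
              field_simp
      linarith
    have := abs_nonneg ((ψ : X → ℝ) x - (ψ : X → ℝ) y)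
    have : |(ψ : X → ℝ) x - (ψ : X → ℝ) y| = 0 := le_antisymm h0 this
    linarith [abs_eq_zero.1 this, sub_eq_zero.1 (abs_eq_zero.1 this)]
/-- Let `X` be a metric space, `μ` a regular σ-finite Borel measure, `F` a
`μ`-preserving transformation and `f ∈ L²(μ)`. Then any weak limit `g` in `L²(μ)`
of a subsequence `f ∘ F^{nᵢ}` is `Wˢ`-invariant. -/
theorem weak_limit_Ws_invariant {X : Type*} [MetricSpace X]
    [MeasurableSpace X] [BorelSpace X]
    (μ : Measure X) [SigmaFinite μ] [μ.Regular]
    (F : X → X) (hFmeas : Measurable F) (hmp : MeasurePreserving F μ μ)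
    (f : Lp ℝ 2 μ)
    (g : Lp ℝ 2 μ) (n : ℕ → ℕ) (hn : StrictMono n)
    (hweak : ∀ h : Lp ℝ 2 μ,
      Tendsto (fun i : ℕ => ∫ x, (f : X → ℝ) (F^[n i] x) * (h : X → ℝ) x ∂μ) atTop
        (𝓝 (∫ x, (g : X → ℝ) x * (h : X → ℝ) x ∂μ))) :
    ∃ g₀ : X → ℝ, (g : X → ℝ) =ᵐ[μ] g₀ ∧
      ∃ Ω : Set X, μ Ωᶜ = 0 ∧
        ∀ x ∈ Ω, ∀ y ∈ Ω,
          Tendsto (fun k : ℕ => dist (F^[k] x) (F^[k] y)) atTop (𝓝 0) →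
          g₀ x = g₀ y := by
  classical
  have hFn : ∀ j : ℕ, MeasurePreserving (F^[j]) μ μ := fun j => hmp.iterate j
  have memf : MemLp ((f : X → ℝ)) 2 μ := Lp.memLp f
  set b : ℕ → Lp ℝ 2 μ := fun j =>
    ((memf.comp_measurePreserving (hFn (n j))).toLp ((f : X → ℝ) ∘ F^[n j])) with hb
  -- Step 1: g lies in the closed convex hull of every tail of (f ∘ F^[n j]).
  have hullmem : ∀ N : ℕ, g ∈ closure (convexHull ℝ (b '' Ici N)) := by
    intro N
    set C := closure (convexHull ℝ (b '' Ici N)) with hC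
    have hCne : C.Nonempty :=
      ⟨b N, subset_closure (subset_convexHull ℝ _ (mem_image_of_mem _ self_mem_Ici))⟩
    have hCconv : Convex ℝ C := (convex_convexHull ℝ _).closure
    obtain ⟨p, hpC, hpmin⟩ :=
      exists_norm_eq_iInf_of_complete_convex hCne isClosed_closure.isComplete hCconv g
    have hchar := (norm_eq_iInf_iff_real_inner_le_zero hCconv hpC).1 hpmin
    have hinner : ∀ (hh : Lp ℝ 2 μ) (j : ℕ),
        (∫ x, (f : X → ℝ) (F^[n j] x) * (hh : X → ℝ) x ∂μ) = inner (𝕜 := ℝ) (b j) hh := by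
      intro hh j
      rw [MeasureTheory.L2.inner_def]
      refine (integral_congr_ae ?_).symm
      filter_upwards [MemLp.coeFn_toLp (memf.comp_measurePreserving (hFn (n j)))] with x hx
      rw [RCLike.inner_apply, conj_trivial, hx]
      exact mul_comm _ _
    have hginner : ∀ hh : Lp ℝ 2 μ,
        (∫ x, (g : X → ℝ) x * (hh : X → ℝ) x ∂μ) = inner (𝕜 := ℝ) g hh := by
      intro hh
      rw [MeasureTheory.L2.inner_def]
      refine integral_congr_ae ?_
      filter_upwards with x
      rw [RCLike.inner_apply, conj_trivial]
      exact mul_comm _ _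
    have hlim : Tendsto (fun i => inner (𝕜 := ℝ) (b i) (g - p)) atTop
        (𝓝 (inner (𝕜 := ℝ) g (g - p))) := by
      have h := hweak (g - p)
      rw [hginner (g - p)] at h
      exact h.congr fun i => hinner (g - p) i
    have hub : inner (𝕜 := ℝ) g (g - p) ≤ inner (𝕜 := ℝ) p (g - p) := by
      refine le_of_tendsto hlim ?_
      filter_upwards [eventually_ge_atTop N] with j hj
      have h1 : inner (𝕜 := ℝ) (g - p) (b j - p) ≤ 0 :=
        hchar _ (subset_closure (subset_convexHull ℝ _ (mem_image_of_mem _ hj)))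
      rw [inner_sub_right] at h1
      have h2 : inner (𝕜 := ℝ) (g - p) (b j) ≤ inner (𝕜 := ℝ) (g - p) p := by linarith
      calc inner (𝕜 := ℝ) (b j) (g - p) = inner (𝕜 := ℝ) (g - p) (b j) := real_inner_comm _ _
        _ ≤ inner (𝕜 := ℝ) (g - p) p := h2
        _ = inner (𝕜 := ℝ) p (g - p) := real_inner_comm _ _
    have hzero : g = p := by
      have h3 : inner (𝕜 := ℝ) (g - p) (g - p) ≤ (0:ℝ) := by
        rw [inner_sub_left]; linarith
      exact sub_eq_zero.1 (real_inner_self_nonpos.1 h3)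
    rw [hC] at *
    rw [hzero]
    exact hpC
  -- Step 2+3: for each k, find ψ close to g whose representative is Wˢ-invariant.
  have main : ∀ k : ℕ, ∃ ψ : Lp ℝ 2 μ, ‖ψ - g‖ ≤ 1/(k+1) ∧ ∃ Ω : Set X, μ Ωᶜ = 0 ∧
      ∀ x ∈ Ω, ∀ y ∈ Ω, (Tendsto (fun m : ℕ => dist (F^[m] x) (F^[m] y)) atTop (𝓝 0)) →
        (ψ : X → ℝ) x = (ψ : X → ℝ) y := by
    intro k
    obtain ⟨φ, hφapprox, ⟨L, hL⟩, hφmem⟩ := exists_lipschitz_approx μ memf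
      (ε := ENNReal.ofReal (1/(k+1)))
      (by rw [ne_eq, ENNReal.ofReal_eq_zero, not_le]; positivity)
    set r := (eLpNorm ((f : X → ℝ) - φ) 2 μ).toReal with hr
    have hrle : r ≤ 1/(k+1) := ENNReal.toReal_le_of_le_ofReal (by positivity) hφapprox
    set Aφ : ℕ → Lp ℝ 2 μ := fun j =>
      ((hφmem.comp_measurePreserving (hFn (n j))).toLp (φ ∘ F^[n j])) with hAφ
    have hdiff : ∀ j, ‖Aφ j - b j‖ ≤ r := by
      intro j
      have h1 : ((Aφ j - b j : Lp ℝ 2 μ) : X → ℝ) =ᵐ[μ] (φ - (f : X → ℝ)) ∘ F^[n j] := by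
        filter_upwards [Lp.coeFn_sub (Aφ j) (b j),
          MemLp.coeFn_toLp (hφmem.comp_measurePreserving (hFn (n j))),
          MemLp.coeFn_toLp (memf.comp_measurePreserving (hFn (n j)))] with x hx1 hx2 hx3
        rw [hx1, Pi.sub_apply, hx2, hx3]
        rfl
      rw [Lp.norm_def, eLpNorm_congr_ae h1,
        eLpNorm_comp_measurePreserving (hφmem.sub memf).aestronglyMeasurable (hFn (n j)),
        show φ - (f : X → ℝ) = -((f : X → ℝ) - φ) by rw [neg_sub], eLpNorm_neg, hr]
    have hdist : ∀ N : ℕ, Metric.infDist g (closure (convexHull ℝ (Aφ '' Ici N))) ≤ r := by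
      intro N
      refine le_of_forall_pos_le_add fun η hη => ?_
      obtain ⟨v, hvmem, hvdist⟩ := Metric.mem_closure_iff.1 (hullmem N) η hη
      obtain ⟨u2, hu2mem, hu2dist⟩ := convexHull_transfer (a := b) (b := Aφ) hdiff hvmem
      refine le_trans (Metric.infDist_le_dist_of_mem (subset_closure hu2mem)) ?_
      calc dist g u2 ≤ dist g v + dist v u2 := dist_triangle _ _ _
        _ ≤ η + r := add_le_add hvdist.le (by rw [dist_comm, dist_eq_norm]; exact hu2dist)
        _ = r + η := add_comm _ _
    obtain ⟨ψ, hψmem, hψnorm⟩ := exists_mem_iInter_of_dist_le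
      (fun N => closure (convexHull ℝ (Aφ '' Ici N)))
      (fun N => (convex_convexHull ℝ _).closure)
      (fun N => isClosed_closure)
      (fun N M hNM => closure_mono (convexHull_mono (image_mono (Ici_subset_Ici.2 hNM))))
      (fun N => ⟨Aφ N, subset_closure (subset_convexHull ℝ _ (mem_image_of_mem _ self_mem_Ici))⟩)
      g hdist
    obtain ⟨Ω, hΩ, hinv⟩ := pointwise_invariance hn hFn hL hφmem ψ hψmem
    exact ⟨ψ, hψnorm.trans hrle, Ω, hΩ, hinv⟩
  choose ψ hψnorm Ω hΩ hinv using main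
  -- a.e. convergent subsequence of representatives
  have hnormtend : Tendsto (fun k => ‖ψ k - g‖) atTop (𝓝 0) :=
    tendsto_of_tendsto_of_tendsto_of_le_of_le tendsto_const_nhds
      tendsto_one_div_add_atTop_nhds_zero_nat (fun k => norm_nonneg _) hψnorm
  have heq : ∀ k, eLpNorm ((ψ k : X → ℝ) - (g : X → ℝ)) 2 μ = ENNReal.ofReal ‖ψ k - g‖ := by
    intro k
    have h1 : ((ψ k - g : Lp ℝ 2 μ) : X → ℝ) =ᵐ[μ] (ψ k : X → ℝ) - (g : X → ℝ) :=
      Lp.coeFn_sub _ _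
    rw [← eLpNorm_congr_ae h1, Lp.norm_def, ENNReal.ofReal_toReal (Lp.eLpNorm_ne_top _)]
  have hcoetend : Tendsto (fun k => eLpNorm ((ψ k : X → ℝ) - (g : X → ℝ)) 2 μ) atTop (𝓝 0) := by
    rw [funext heq, show (0:ℝ≥0∞) = ENNReal.ofReal 0 by simp]
    exact ENNReal.tendsto_ofReal hnormtend
  have hmeasconv : TendstoInMeasure μ (fun k => (ψ k : X → ℝ)) atTop ((g : X → ℝ)) :=
    tendstoInMeasure_of_tendsto_eLpNorm_of_ne_top (by norm_num) (by norm_num)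
      (fun k => Lp.aestronglyMeasurable _) (Lp.aestronglyMeasurable _) hcoetend
  obtain ⟨ks, hksmono, hae⟩ := hmeasconv.exists_seq_tendsto_ae
  set T : (ℕ → ℝ) → ℝ := fun s => if h : ∃ c, Tendsto s atTop (𝓝 c) then h.choose else 0 with hT
  refine ⟨fun x => T (fun l => (ψ (ks l) : X → ℝ) x), ?_, ⋂ k, Ω k, ?_, ?_⟩
  · filter_upwards [hae] with x hx
    have hex : ∃ c, Tendsto (fun l => (ψ (ks l) : X → ℝ) x) atTop (𝓝 c) := ⟨_, hx⟩
    rw [hT]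
    simp only [dif_pos hex]
    exact tendsto_nhds_unique hx hex.choose_spec
  · rw [compl_iInter]
    exact measure_iUnion_null fun k => hΩ k
  · intro x hx y hy hxy
    have hseq : (fun l => (ψ (ks l) : X → ℝ) x) = (fun l => (ψ (ks l) : X → ℝ) y) :=
      funext fun l => hinv (ks l) x (mem_iInter.1 hx _) y (mem_iInter.1 hy _) hxy
    exact congrArg T hseq
end

section
/- Let (u_n) be a sequence of positive reals with 1/u_n ≥ exp(2/(6n + 2 ln n + C) − 4/(6n + 2 ln n + C)² + ε_n) where Σ|ε_n| < ∞. Then there exists a constant C' > 0 such that ∏_{i=1}^{n−1} u_i^{-1} ≥ C' n^{1/3} for all n ≥ 2. -/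
open Real Finset

private lemma key_est (C x : ℝ) (hx : 1 ≤ x) (hCx : |C| ≤ x) :
    -((8 + |C|) * (x ^ ((3:ℝ)/2))⁻¹) ≤
      2 / (6*x + 2*Real.log x + C) - 4 / (6*x + 2*Real.log x + C)^2
        - (Real.log (x+1) - Real.log x)/3 := by
  have hx0 : (0:ℝ) < x := by linarith
  have hL : 0 ≤ Real.log x := Real.log_nonneg hx
  set L := Real.log x with hLdef
  set M := 2*L + |C| with hMdef
  have hC0 : 0 ≤ |C| := abs_nonneg C
  have hM0 : 0 ≤ M := by positivity
  have hD'pos : (0:ℝ) < 6*x + M := by nlinarith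
  have hDle : 6*x + 2*L + C ≤ 6*x + M := by
    have := le_abs_self C; simp only [hMdef]; linarith
  have hDge : x ≤ 6*x + 2*L + C := by
    have := neg_abs_le C; nlinarith
  have hDpos : (0:ℝ) < 6*x + 2*L + C := lt_of_lt_of_le hx0 hDge
  have h1 : 2/(6*x+M) ≤ 2/(6*x+2*L+C) := by gcongr
  have h2 : (x - M)/(3*x^2) ≤ 2/(6*x+M) := by
    rw [div_le_div_iff₀ (by positivity) hD'pos]
    nlinarith
  have h3 : Real.log (x+1) - Real.log x ≤ 1/x := by
    rw [← Real.log_div (by linarith) (ne_of_gt hx0)]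
    have h := Real.log_le_sub_one_of_pos (x := (x+1)/x) (by positivity)
    have he : (x+1)/x - 1 = 1/x := by field_simp; ring
    linarith
  have h4 : 4/(6*x+2*L+C)^2 ≤ 4/x^2 := by
    gcongr <;> nlinarith
  have hcomb : -(M/(3*x^2)) - 4/x^2 ≤
      2/(6*x+2*L+C) - 4/(6*x+2*L+C)^2 - (Real.log (x+1) - Real.log x)/3 := by
    have e : (x - M)/(3*x^2) - (1/x)/3 = -(M/(3*x^2)) := by field_simp; ring
    linarith
  -- now rpow estimates
  have hs1 : (1:ℝ) ≤ Real.sqrt x := by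
    rw [show (1:ℝ) = Real.sqrt 1 by simp]
    exact Real.sqrt_le_sqrt hx
  have hlogs : L ≤ 2 * Real.sqrt x := by
    have h := Real.log_le_sub_one_of_pos (x := Real.sqrt x) (by positivity)
    have h2 : Real.log (Real.sqrt x) = L / 2 := Real.log_sqrt hx0.le
    nlinarith
  have hMs : M ≤ (4 + |C|) * Real.sqrt x := by
    have : |C| ≤ |C| * Real.sqrt x := le_mul_of_one_le_right hC0 hs1
    nlinarith
  have hprod : x ^ ((1:ℝ)/2) * x ^ ((3:ℝ)/2) = x^2 := by
    rw [← Real.rpow_add hx0]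
    norm_num
  have hsx : Real.sqrt x / x^2 = (x ^ ((3:ℝ)/2))⁻¹ := by
    rw [Real.sqrt_eq_rpow, ← hprod, div_mul_cancel_left₀ (by positivity)]
  have hx2 : (1:ℝ)/x^2 ≤ Real.sqrt x / x^2 := by gcongr
  have hMx : M / x^2 ≤ ((4+|C|) * Real.sqrt x) / x^2 := by gcongr
  have hfin : (8 + |C|) * (x ^ ((3:ℝ)/2))⁻¹ = (8+|C|) * (Real.sqrt x / x^2) := by
    rw [hsx]
  -- M/(3x^2) + 4/x^2 ≤ (8+|C|) * (sqrt x / x^2)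
  have : M/(3*x^2) + 4/x^2 ≤ (8 + |C|) * (Real.sqrt x / x^2) := by
    have e1 : M/(3*x^2) = (M / x^2)/3 := by ring
    have e2 : (4:ℝ)/x^2 = 4 * (1/x^2) := by ring
    have e3 : ((4+|C|) * Real.sqrt x) / x^2 = (4+|C|) * (Real.sqrt x / x^2) := by ring
    have hMq : 0 ≤ M / x^2 := by positivity
    have hMx' : M/x^2 ≤ (4+|C|) * (Real.sqrt x / x^2) := e3 ▸ hMx
    linarith [hx2, hMx', hMq]
  linarith [hcomb, hfin ▸ this]

private lemma telescope_log (n : ℕ) (hn : 2 ≤ n) :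
    ∑ i ∈ Finset.Icc 1 (n-1), (Real.log ((i:ℝ)+1) - Real.log i) = Real.log n := by
  have h1 : ∑ i ∈ Finset.Icc 1 (n-1), (Real.log ((i:ℝ)+1) - Real.log i)
      = ∑ i ∈ Finset.range (n-1), (Real.log ((↑(1+i):ℝ)+1) - Real.log (↑(1+i):ℝ)) := by
    rw [show Finset.Icc 1 (n-1) = Finset.Ico 1 n by
          rw [← Finset.Ico_add_one_right_eq_Icc]
          congr 1
          omega,
        Finset.sum_Ico_eq_sum_range]
  rw [h1]
  have h2 : ∀ i ∈ Finset.range (n-1),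
      (Real.log ((↑(1+i):ℝ)+1) - Real.log (↑(1+i):ℝ))
        = (fun j : ℕ => Real.log ((j:ℝ)+1)) (i+1) - (fun j : ℕ => Real.log ((j:ℝ)+1)) i := by
    intro i _
    push_cast
    ring_nf
  rw [Finset.sum_congr rfl h2, Finset.sum_range_sub (f := fun j : ℕ => Real.log ((j:ℝ)+1))]
  have : ((n-1 : ℕ) : ℝ) + 1 = (n : ℝ) := by
    have : (1:ℕ) ≤ n := by omega
    push_cast [Nat.cast_sub this]
    ring
  rw [this]
  simp


/-- Multiplicative lower estimate: if `1/uₙ ≥ exp(2/(6n + 2 ln n + C) −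
4/(6n + 2 ln n + C)² + εₙ)` with `∑ |εₙ| < ∞`, then `∏_{i=1}^{n−1} uᵢ⁻¹ ≥ C' n^{1/3}`. -/
theorem product_lower_bound (u ε : ℕ → ℝ) (C : ℝ)
    (hu : ∀ n : ℕ, 1 ≤ n → 0 < u n)
    (hden : ∀ n : ℕ, 1 ≤ n → 0 < 6 * (n : ℝ) + 2 * Real.log n + C)
    (hε : Summable fun n => |ε n|)
    (hrec : ∀ n : ℕ, 1 ≤ n →
      Real.exp (2 / (6 * (n : ℝ) + 2 * Real.log n + C)
        - 4 / (6 * (n : ℝ) + 2 * Real.log n + C) ^ 2 + ε n) ≤ 1 / u n) :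
    ∃ C' : ℝ, 0 < C' ∧ ∀ n : ℕ, 2 ≤ n →
      C' * (n : ℝ) ^ ((1 : ℝ) / 3) ≤ ∏ i ∈ Finset.Icc 1 (n - 1), (u i)⁻¹ := by
  set N : ℕ := ⌈|C|⌉₊ + 1 with hN
  set f : ℕ → ℝ := fun i => 2 / (6 * (i : ℝ) + 2 * Real.log i + C)
        - 4 / (6 * (i : ℝ) + 2 * Real.log i + C) ^ 2 + ε i with hf
  set r : ℕ → ℝ := fun i => f i - (Real.log ((i:ℝ)+1) - Real.log i)/3 with hr
  set b : ℕ → ℝ := fun i => (8+|C|) * ((i:ℝ) ^ ((3:ℝ)/2))⁻¹ + |ε i| with hb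
  have hbsum : Summable b := by
    apply Summable.add _ hε
    apply Summable.mul_left
    have h : Summable (fun i : ℕ => 1 / (i:ℝ)^((3:ℝ)/2)) :=
      Real.summable_one_div_nat_rpow.mpr (by norm_num)
    simpa [one_div] using h
  set g : ℕ → ℝ := fun i => if i < N then |r i| else b i with hg
  have hb0 : ∀ i, 0 ≤ b i := by
    intro i; simp only [hb]; positivity
  have hg0 : ∀ i, 0 ≤ g i := by
    intro i
    by_cases h : i < N <;> simp only [hg, h, if_true, if_false, abs_nonneg]
    exact hb0 i
  have hgsum : Summable g := by
    have hfin : Summable (fun i => g i - b i) := by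
      apply summable_of_ne_finset_zero (s := Finset.range N)
      intro i hi
      simp only [Finset.mem_range, not_lt] at hi
      simp [hg, Nat.not_lt.mpr hi]
    exact (hbsum.add hfin).congr (fun i => by ring)
  set K : ℝ := ∑' i, g i with hK
  have hpart : ∀ s : Finset ℕ, ∑ i ∈ s, g i ≤ K :=
    fun s => Summable.sum_le_tsum s (fun i _ => hg0 i) hgsum
  have hpoint : ∀ i : ℕ, 1 ≤ i → -(g i) ≤ r i := by
    intro i hi
    by_cases h : i < N
    · simp only [hg, h, if_true]
      exact neg_abs_le _
    · simp only [hg, h, if_false]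
      push_neg at h
      have hCi : |C| ≤ (i:ℝ) := by
        calc |C| ≤ (⌈|C|⌉₊ : ℝ) := Nat.le_ceil _
        _ ≤ (i : ℝ) := by exact_mod_cast le_trans (Nat.le_succ _) h
      have hxi : (1:ℝ) ≤ (i:ℝ) := by exact_mod_cast hi
      have hk := key_est C i hxi hCi
      have hab : -|ε i| ≤ ε i := neg_abs_le _
      simp only [hr, hf, hb]
      linarith
  refine ⟨Real.exp (-K), Real.exp_pos _, ?_⟩
  intro n hn
  -- sum of r bounded below
  have hrsum : -K ≤ ∑ i ∈ Finset.Icc 1 (n-1), r i := by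
    have h1 : ∑ i ∈ Finset.Icc 1 (n-1), (-(g i)) ≤ ∑ i ∈ Finset.Icc 1 (n-1), r i := by
      apply Finset.sum_le_sum
      intro i hi
      exact hpoint i (Finset.mem_Icc.mp hi).1
    have h2 : ∑ i ∈ Finset.Icc 1 (n-1), (-(g i)) = -(∑ i ∈ Finset.Icc 1 (n-1), g i) :=
      Finset.sum_neg_distrib _
    have h3 := hpart (Finset.Icc 1 (n-1))
    linarith
  have hfsum : (1:ℝ)/3 * Real.log n - K ≤ ∑ i ∈ Finset.Icc 1 (n-1), f i := by
    have e : ∀ i, f i = (Real.log ((i:ℝ)+1) - Real.log i)/3 + r i := by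
      intro i; simp only [hr]; ring
    rw [Finset.sum_congr rfl (fun i _ => e i), Finset.sum_add_distrib,
        ← Finset.sum_div, telescope_log n hn]
    linarith
  have hprod : Real.exp (∑ i ∈ Finset.Icc 1 (n-1), f i)
      ≤ ∏ i ∈ Finset.Icc 1 (n-1), (u i)⁻¹ := by
    rw [Real.exp_sum]
    apply Finset.prod_le_prod (fun i _ => (Real.exp_pos _).le)
    intro i hi
    rw [← one_div]
    exact hrec i (Finset.mem_Icc.mp hi).1
  calc Real.exp (-K) * (n:ℝ) ^ ((1:ℝ)/3)
      = Real.exp (-K + Real.log n * ((1:ℝ)/3)) := by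
        rw [Real.exp_add, Real.rpow_def_of_pos (by exact_mod_cast Nat.pos_of_ne_zero (by omega))]
    _ ≤ Real.exp (∑ i ∈ Finset.Icc 1 (n-1), f i) := by
        apply Real.exp_le_exp.mpr
        linarith
    _ ≤ _ := hprod
end

section
/- Let (u_n) be positive reals with 1/u_n² ≤ 1 + 4/(6n − 2 ln n + C) + 4/(6n − 2 ln n + C)² + ε_n, Σ|ε_n| < ∞. Then there exists C' > 0 such that ∏_{i=1}^{n−1} u_i^{-2} ≤ C' n^{2/3} for all n ≥ 2. -/
open Real Finset

private lemma log_telescope (m : ℕ) :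
    ∑ i ∈ Finset.Icc 1 m, (Real.log ((i:ℝ) + 1) - Real.log i) = Real.log ((m:ℝ) + 1) := by
  induction m with
  | zero => simp
  | succ m ih =>
      rw [Finset.sum_Icc_succ_top (by omega : 1 ≤ m + 1), ih]
      push_cast
      ring

private lemma log_gap (i : ℕ) (hi : 1 ≤ i) :
    1 / ((i:ℝ) + 1) ≤ Real.log ((i:ℝ) + 1) - Real.log i := by
  have h0 : (0:ℝ) < i := by exact_mod_cast hi
  have h1 : (0:ℝ) < (i:ℝ) + 1 := by linarith
  have h2 : Real.log ((i:ℝ) / ((i:ℝ)+1)) ≤ (i:ℝ)/((i:ℝ)+1) - 1 :=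
    Real.log_le_sub_one_of_pos (by positivity)
  rw [Real.log_div (ne_of_gt h0) (ne_of_gt h1)] at h2
  have h3 : (i:ℝ)/((i:ℝ)+1) - 1 = -(1/((i:ℝ)+1)) := by field_simp; ring
  rw [h3] at h2
  linarith

private lemma log_le_two_sqrt (i : ℕ) (hi : 1 ≤ i) :
    Real.log i ≤ 2 * Real.sqrt i - 2 := by
  have h0 : (0:ℝ) < i := by exact_mod_cast hi
  have h2 := Real.log_le_sub_one_of_pos (Real.sqrt_pos.mpr h0)
  have hs : Real.log (Real.sqrt i) = Real.log i / 2 := Real.log_sqrt h0.le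
  rw [hs] at h2
  linarith

set_option maxHeartbeats 1600000 in
/-- Multiplicative upper estimate -/
theorem product_upper_bound (u ε : ℕ → ℝ) (C : ℝ)
    (hu : ∀ n : ℕ, 1 ≤ n → 0 < u n)
    (hden : ∀ n : ℕ, 1 ≤ n → 0 < 6 * (n : ℝ) - 2 * Real.log n + C)
    (hε : Summable fun n => |ε n|)
    (hrec : ∀ n : ℕ, 1 ≤ n →
      1 / (u n) ^ 2 ≤ 1 + 4 / (6 * (n : ℝ) - 2 * Real.log n + C)
        + 4 / (6 * (n : ℝ) - 2 * Real.log n + C) ^ 2 + ε n) :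
    ∃ C' : ℝ, 0 < C' ∧ ∀ n : ℕ, 2 ≤ n →
      ∏ i ∈ Finset.Icc 1 (n - 1), ((u i)⁻¹) ^ 2 ≤ C' * (n : ℝ) ^ ((2 : ℝ) / 3) := by
  classical
  set d : ℕ → ℝ := fun i => 6 * (i:ℝ) - 2 * Real.log i + C with hd_def
  set e : ℕ → ℝ := fun i => 4 / d i + 4 / (d i) ^ 2 + ε i with he_def
  set g : ℕ → ℝ := fun i => e i - 2/3 * (Real.log ((i:ℝ)+1) - Real.log i) with hg_def
  set N : ℕ := ⌈|C|⌉₊ + 1 with hN_def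
  have hNC : ∀ i : ℕ, N ≤ i → |C| ≤ (i:ℝ) := by
    intro i hi
    have h1 : |C| ≤ (⌈|C|⌉₊ : ℝ) := Nat.le_ceil _
    have h2 : (⌈|C|⌉₊:ℝ) ≤ (i:ℝ) := by exact_mod_cast le_trans (Nat.le_succ _) hi
    linarith
  have hd3 : ∀ i : ℕ, N ≤ i → 3 * (i:ℝ) ≤ d i := by
    intro i hi
    have hi1 : 1 ≤ i := by omega
    have h0 : (0:ℝ) < i := by exact_mod_cast hi1
    have hlog : Real.log i ≤ (i:ℝ) - 1 := Real.log_le_sub_one_of_pos h0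
    have hC : |C| ≤ (i:ℝ) := hNC i hi
    have hC' : -(i:ℝ) ≤ C := by
      have := neg_abs_le C; linarith
    show 3 * (i:ℝ) ≤ 6 * (i:ℝ) - 2 * Real.log i + C
    linarith
  set φ : ℕ → ℝ := fun i => (|C| + 7) / (i:ℝ) ^ ((3:ℝ)/2) + |ε i| with hφ_def
  have hφ0 : ∀ i, 0 ≤ φ i := by
    intro i
    have h1 : 0 ≤ (|C| + 7) / (i:ℝ) ^ ((3:ℝ)/2) := by positivity
    have h2 : (0:ℝ) ≤ |ε i| := abs_nonneg _
    simp only [hφ_def]; linarith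
  have hφs : Summable φ := by
    apply Summable.add
    · have h1 : Summable (fun i : ℕ => 1 / (i:ℝ) ^ ((3:ℝ)/2)) :=
        Real.summable_one_div_nat_rpow.mpr (by norm_num)
      simpa [div_eq_mul_inv, one_div, mul_comm] using h1.mul_left (|C| + 7)
    · exact hε
  -- pointwise bound
  have hpoint : ∀ i : ℕ, N ≤ i → g i ≤ φ i := by
    intro i hi
    have hdi : d i = 6 * (i:ℝ) - 2 * Real.log i + C := rfl
    have hgi : g i = 4 / d i + 4 / (d i)^2 + ε i
        - 2/3 * (Real.log ((i:ℝ)+1) - Real.log i) := rfl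
    have hφieq : φ i = (|C| + 7) / (i:ℝ) ^ ((3:ℝ)/2) + |ε i| := rfl
    have hi1 : 1 ≤ i := by omega
    clear_value d e g φ N
    have h0 : (0:ℝ) < i := by exact_mod_cast hi1
    have h1 : (1:ℝ) ≤ i := by exact_mod_cast hi1
    have hdpos : 0 < d i := by rw [hdi]; exact hden i hi1
    have hd3i := hd3 i hi
    obtain ⟨s, hs_eq⟩ : ∃ s : ℝ, Real.sqrt i = s := ⟨_, rfl⟩
    have hs0 : 0 < s := hs_eq ▸ Real.sqrt_pos.mpr h0
    have hs1 : 1 ≤ s := by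
      rw [← hs_eq, show (1:ℝ) = Real.sqrt 1 from (Real.sqrt_one).symm]
      exact Real.sqrt_le_sqrt h1
    have hss : s * s = (i:ℝ) := by rw [← hs_eq]; exact Real.mul_self_sqrt h0.le
    have hlog2 : Real.log i ≤ 2 * s - 2 := hs_eq ▸ log_le_two_sqrt i hi1
    have hCabs : |C| ≤ (i:ℝ) := hNC i hi
    -- key identity
    have key : 4 / d i - 2/(3*(i:ℝ)) = (4 * Real.log i - 2*C) / (3 * (i:ℝ) * d i) := by
      have hne : d i ≠ 0 := ne_of_gt hdpos
      have hine : (i:ℝ) ≠ 0 := ne_of_gt h0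
      field_simp
      rw [hdi]
      ring
    have hnum : 4 * Real.log i - 2 * C ≤ 8 * s + 2 * |C| := by
      have := neg_abs_le C
      linarith
    have hden2 : 9 * (i:ℝ)^2 ≤ 3 * (i:ℝ) * d i := by nlinarith
    have stepa : (4 * Real.log i - 2*C) / (3 * (i:ℝ) * d i)
        ≤ (8 * s + 2 * |C|) / (9 * (i:ℝ)^2) := by
      apply div_le_div₀ (by positivity) hnum (by positivity) hden2
    have hA : 4 / d i ≤ 2/(3*(i:ℝ)) + (8 * s + 2 * |C|) / (9 * (i:ℝ)^2) := by
      linarith [key ▸ stepa]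
    have hB : 4 / (d i)^2 ≤ 1 / (i:ℝ)^2 := by
      have h9 : 9 * (i:ℝ)^2 ≤ (d i)^2 := by nlinarith
      have : 4 / (d i)^2 ≤ 4 / (9 * (i:ℝ)^2) :=
        div_le_div_of_nonneg_left (by norm_num) (by positivity) h9
      have h2 : 4 / (9 * (i:ℝ)^2) ≤ 1 / (i:ℝ)^2 := by
        rw [div_le_div_iff₀ (by positivity) (by positivity)]
        nlinarith
      linarith
    have hgap := log_gap i hi1
    have hfrac : 2/(3*(i:ℝ)) - 2/3 * (1/((i:ℝ)+1)) ≤ 1 / (i:ℝ)^2 := by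
      have heq : 2/(3*(i:ℝ)) - 2/3 * (1/((i:ℝ)+1)) = 2 / (3*(i:ℝ)*((i:ℝ)+1)) := by
        field_simp
        ring
      rw [heq, div_le_div_iff₀ (by positivity) (by positivity)]
      nlinarith [h1, h0.le]
    have ht : (i:ℝ)^((3:ℝ)/2) = (i:ℝ) * s := by
      rw [show (3:ℝ)/2 = 1 + 1/2 by norm_num, Real.rpow_add h0, Real.rpow_one,
        ← Real.sqrt_eq_rpow, hs_eq]
    have habs : (0:ℝ) ≤ |C| := abs_nonneg _
    have hsi : s ≤ (i:ℝ) := by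
      calc s = s * 1 := (mul_one _).symm
        _ ≤ s * s := by
            exact mul_le_mul_of_nonneg_left hs1 hs0.le
        _ = (i:ℝ) := hss
    have hm1 : (8 * s + 2 * |C|) / (9 * (i:ℝ)^2)
        ≤ (|C| + 1) / ((i:ℝ) * s) := by
      rw [div_le_div_iff₀ (by positivity) (by positivity), ← hss]
      nlinarith [mul_nonneg (mul_nonneg (sub_nonneg.mpr hs1) habs)
        (by positivity : (0:ℝ) ≤ s ^ 3), pow_nonneg hs0.le 4, hs1, hs0.le]
    have hm2 : 2 / (i:ℝ)^2 ≤ 2 / ((i:ℝ) * s) := by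
      apply div_le_div_of_nonneg_left (by norm_num) (by positivity)
      calc (i:ℝ) * s ≤ (i:ℝ) * (i:ℝ) :=
            mul_le_mul_of_nonneg_left hsi h0.le
        _ = (i:ℝ)^2 := (sq (i:ℝ)).symm
    have hmain : (8 * s + 2 * |C|) / (9 * (i:ℝ)^2) + 2 / (i:ℝ)^2
        ≤ (|C| + 7) / ((i:ℝ) * s) := by
      have hm3 : (|C| + 1) / ((i:ℝ) * s) + 2 / ((i:ℝ) * s)
          ≤ (|C| + 7) / ((i:ℝ) * s) := by
        rw [← add_div, div_le_div_iff₀ (by positivity) (by positivity)]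
        nlinarith [mul_pos h0 hs0, habs]
      linarith
    have hεi : ε i ≤ |ε i| := le_abs_self _
    have hΔ : 2/3 * (1/((i:ℝ)+1)) ≤ 2/3 * (Real.log ((i:ℝ)+1) - Real.log i) := by
      linarith
    have hφi : φ i = (|C| + 7) / ((i:ℝ) * s) + |ε i| := by
      rw [hφieq, ht]
    have h2Y : 2 / (i:ℝ)^2 = 2 * (1 / (i:ℝ)^2) := by ring
    rw [hgi, hφi]
    linarith
  -- ψ and partial sums
  set ψ : ℕ → ℝ := fun i => if i < N then |g i| else φ i with hψ_def
  have hψ0 : ∀ i, 0 ≤ ψ i := by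
    intro i
    by_cases h : i < N <;> simp [hψ_def, h, abs_nonneg, hφ0 i]
  have hψs : Summable ψ := by
    rw [← summable_nat_add_iff N]
    have heq : (fun i => ψ (i + N)) = fun i => φ (i + N) := by
      funext i
      simp [hψ_def, Nat.not_lt.mpr (Nat.le_add_left N i)]
    rw [heq]
    exact (summable_nat_add_iff N).mpr hφs
  have hgψ : ∀ i, g i ≤ ψ i := by
    intro i
    by_cases h : i < N
    · simp only [hψ_def, if_pos h]; exact le_abs_self _
    · simp only [hψ_def, if_neg h]; exact hpoint i (Nat.not_lt.mp h)
  set K := ∑' i, ψ i with hK_def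
  have hsum_g : ∀ m : ℕ, ∑ i ∈ Icc 1 m, g i ≤ K := by
    intro m
    calc ∑ i ∈ Icc 1 m, g i ≤ ∑ i ∈ Icc 1 m, ψ i :=
          Finset.sum_le_sum (fun i _ => hgψ i)
      _ ≤ K := Summable.sum_le_tsum _ (fun i _ => hψ0 i) hψs
  -- exponent bound
  have hexp : ∀ n : ℕ, 2 ≤ n → ∑ i ∈ Icc 1 (n-1), e i ≤ 2/3 * Real.log n + K := by
    intro n hn
    have htel := log_telescope (n-1)
    have hge : ∑ i ∈ Icc 1 (n-1), e i
        = ∑ i ∈ Icc 1 (n-1), g i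
          + 2/3 * ∑ i ∈ Icc 1 (n-1), (Real.log ((i:ℝ)+1) - Real.log i) := by
      rw [Finset.mul_sum, ← Finset.sum_add_distrib]
      apply Finset.sum_congr rfl
      intro i _
      simp only [hg_def]
      ring
    have hcast : ((n-1:ℕ):ℝ) + 1 = (n:ℝ) := by
      have h : (n-1)+1 = n := by omega
      exact_mod_cast congrArg (fun k : ℕ => (k:ℝ)) h
    rw [hge, htel, hcast]
    linarith [hsum_g (n-1)]
  refine ⟨Real.exp K, Real.exp_pos K, ?_⟩
  intro n hn
  have hn1 : 1 ≤ n := by omega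
  have hn0 : (0:ℝ) < n := by
    have : (0:ℕ) < n := by omega
    exact_mod_cast this
  have hprod : ∏ i ∈ Icc 1 (n-1), ((u i)⁻¹)^2 ≤ ∏ i ∈ Icc 1 (n-1), Real.exp (e i) := by
    apply Finset.prod_le_prod
    · intro i _; positivity
    · intro i hi
      have hi1 : 1 ≤ i := (Finset.mem_Icc.mp hi).1
      have h1 := hrec i hi1
      have h2 : ((u i)⁻¹)^2 = 1/(u i)^2 := by rw [inv_pow, one_div]
      have h3 : 1 + e i ≤ Real.exp (e i) := by
        linarith [Real.add_one_le_exp (e i)]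
      have h4 : e i = 4 / d i + 4 / (d i)^2 + ε i := rfl
      rw [h2, h4]
      calc 1/(u i)^2 ≤ 1 + 4 / (6 * (i:ℝ) - 2 * Real.log i + C)
            + 4 / (6 * (i:ℝ) - 2 * Real.log i + C) ^ 2 + ε i := h1
        _ = 1 + (4 / d i + 4 / (d i)^2 + ε i) := by rw [hd_def]; ring
        _ ≤ Real.exp (4 / d i + 4 / (d i)^2 + ε i) := by
            linarith [Real.add_one_le_exp (4 / d i + 4 / (d i)^2 + ε i)]
  have hsum := hexp n hn
  calc ∏ i ∈ Icc 1 (n-1), ((u i)⁻¹)^2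
      ≤ ∏ i ∈ Icc 1 (n-1), Real.exp (e i) := hprod
    _ = Real.exp (∑ i ∈ Icc 1 (n-1), e i) := (Real.exp_sum _ _).symm
    _ ≤ Real.exp (2/3 * Real.log n + K) := Real.exp_le_exp.mpr hsum
    _ = Real.exp K * (n:ℝ) ^ ((2:ℝ)/3) := by
        rw [Real.exp_add, Real.rpow_def_of_pos hn0]
        ring_nf
end

section
/- Let 0 < a < A and 0 < b < B be constants and (λ_m) positive reals (backward recursion) satisfying a/m² + (1 + b/m)·λ_m/(1+λ_m) ≤ λ_{m−1} ≤ A/m² + (1 + B/m)·λ_m/(1+λ_m) for all m ≥ m_0. Then there exist constants 0 < c < C such that c/m ≤ λ_m ≤ C/m for all m ≥ m_0, i.e., λ_m ≍ 1/m. -/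
lemma low_core (a c0 mR kR jR : ℝ) (hm : 1 ≤ mR) (hk0 : 0 ≤ kR) (hk : kR + 1 ≤ mR)
    (hsum : jR + kR = 2*mR) (hc0 : 0 < c0) (hca : 3*c0 ≤ a) (hc1 : c0 ≤ 1/3) :
    c0*(kR+1)/((jR-1)*(2*mR)) ≤ a/jR^2 +
      (c0*kR/(jR*(2*mR)))/(1 + c0*kR/(jR*(2*mR))) := by
  have hj2 : 2 ≤ jR := by linarith
  have hjpos : 0 < jR := by linarith
  have hmpos : 0 < mR := by linarith
  set x := c0*kR/(jR*(2*mR)) with hx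
  have hx0 : 0 ≤ x := by rw [hx]; positivity
  have hx1 : x ≤ c0/(2*jR) := by
    rw [hx, div_le_div_iff₀ (by positivity) (by positivity)]
    nlinarith [mul_nonneg (mul_nonneg hc0.le hjpos.le) (by linarith : (0:ℝ) ≤ mR - kR)]
  have hfx : x - x^2 ≤ x/(1+x) := by
    rw [le_div_iff₀ (by linarith)]; nlinarith
  have hid : c0*(kR+1)/((jR-1)*(2*mR)) = x + c0/(jR*(jR-1)) := by
    have h1 : jR - 1 ≠ 0 := by linarith
    have h2 : jR ≠ 0 := by linarith
    have h3 : mR ≠ 0 := by linarith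
    have hk' : kR = 2*mR - jR := by linarith
    rw [hx, hk']
    field_simp
    ring
  have key : c0/(jR*(jR-1)) + x^2 ≤ a/jR^2 := by
    have h1 : x^2 ≤ c0^2/(4*jR^2) := by
      have h := mul_self_le_mul_self hx0 hx1
      have e : c0/(2*jR)*(c0/(2*jR)) = c0^2/(4*jR^2) := by
        field_simp; ring
      rw [sq]; rw [e] at h; exact h
    have h2 : c0/(jR*(jR-1)) ≤ 2*c0/jR^2 := by
      rw [div_le_div_iff₀ (by nlinarith) (by positivity)]
      nlinarith [mul_nonneg hc0.le (by nlinarith : (0:ℝ) ≤ jR*(jR-2))]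
    have h3 : c0^2/(4*jR^2) + 2*c0/jR^2 ≤ a/jR^2 := by
      rw [div_add_div _ _ (by positivity) (by positivity),
        div_le_div_iff₀ (by positivity) (by positivity)]
      have hc2 : c0^2 ≤ c0/3 := by nlinarith
      have hpos4 : (0:ℝ) ≤ 4*a - c0^2 - 8*c0 := by linarith
      nlinarith [mul_nonneg hpos4 (sq_nonneg (jR^2)), mul_nonneg hpos4 (sq_nonneg jR)]
    linarith
  calc c0*(kR+1)/((jR-1)*(2*mR)) = x + c0/(jR*(jR-1)) := hid
    _ ≤ x + (a/jR^2 - x^2) := by linarith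
    _ = a/jR^2 + (x - x^2) := by ring
    _ ≤ a/jR^2 + x/(1+x) := by linarith

lemma up_core (A B D u jR : ℝ) (hA : 0 < A) (hB : 0 < B) (hDpos : 0 < D)
    (hkey : A + A*D + B*D ≤ D*(D-1))
    (hu : 1 ≤ u) (huj : u + 1 ≤ jR) :
    A/jR^2 + (1+B/jR)*(D/(u+D)) ≤ D/(u+1) := by
  have hj : 0 < jR := by linarith
  have hud : 0 < u + D := by linarith
  have hu1 : (0:ℝ) < u + 1 := by linarith
  rw [← sub_nonneg]
  have e : D/(u+1) - (A/jR^2 + (1+B/jR)*(D/(u+D)))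
      = (D*jR^2*(D-1) - A*(u+D)*(u+1) - D*B*jR*(u+1)) / (jR^2*(u+D)*(u+1)) := by
    field_simp
    ring
  rw [e]
  apply div_nonneg _ (by positivity)
  have t1 : A*((u+D)*(u+1)) ≤ A*((jR+D)*jR) := by
    apply mul_le_mul_of_nonneg_left _ hA.le
    apply mul_le_mul (by linarith) (by linarith) hu1.le (by positivity)
  have t2 : D*B*jR*(u+1) ≤ D*B*jR*jR := by
    apply mul_le_mul_of_nonneg_left (by linarith) (by positivity)
  have t3 : A*D*jR ≤ A*D*jR^2 := by
    nlinarith [mul_nonneg (mul_nonneg (mul_pos hA hDpos).le hj.le) (by linarith : (0:ℝ) ≤ jR - 1)]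
  have t4 : 0 ≤ (D*(D-1) - A - A*D - B*D) * jR^2 := mul_nonneg (by linarith) (sq_nonneg _)
  nlinarith [t1, t2, t3, t4]

set_option maxHeartbeats 1600000 in
/-- Recursive comparison lemma (exiting period, backward recursion): if
`a/m² + (1 + b/m)·λₘ/(1+λₘ) ≤ λ_{m−1} ≤ A/m² + (1 + B/m)·λₘ/(1+λₘ)` for all
`m ≥ m₀`, with `λₘ > 0`, then `λₘ ≍ 1/m`. -/
theorem lambda_asymptotics_exiting (a A b B : ℝ)
    (ha : 0 < a) (haA : a < A) (hb : 0 < b) (hbB : b < B)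
    (m₀ : ℕ) (hm₀ : 1 ≤ m₀) (lam : ℕ → ℝ)
    (hpos : ∀ m, m₀ ≤ m → 0 < lam m)
    (hrec : ∀ m : ℕ, m₀ + 1 ≤ m →
      a / (m : ℝ) ^ 2 + (1 + b / m) * (lam m / (1 + lam m)) ≤ lam (m - 1) ∧
      lam (m - 1) ≤ A / (m : ℝ) ^ 2 + (1 + B / m) * (lam m / (1 + lam m))) :
    ∃ c C : ℝ, 0 < c ∧ c < C ∧
      ∀ m, m₀ ≤ m → c / m ≤ lam m ∧ lam m ≤ C / m := by
  have hApos : 0 < A := ha.trans haA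
  have hBpos : 0 < B := hb.trans hbB
  have hfrac_mono : ∀ x y : ℝ, 0 ≤ x → x ≤ y → x/(1+x) ≤ y/(1+y) := by
    intro x y hx hxy
    rw [div_le_div_iff₀ (by linarith) (by linarith)]
    nlinarith
  obtain ⟨c0, hc0def⟩ : ∃ c0 : ℝ, c0 = min a 1 / 3 := ⟨_, rfl⟩
  have hc0pos : 0 < c0 := by rw [hc0def]; have := lt_min ha one_pos; positivity
  have hc0a : 3*c0 ≤ a := by rw [hc0def]; have := min_le_left a 1; linarith
  have hc0_1 : c0 ≤ 1/3 := by rw [hc0def]; have := min_le_right a 1; linarith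
  obtain ⟨D, hDdef⟩ : ∃ D : ℝ, D = 3*A+2*B+2 := ⟨_, rfl⟩
  have hDpos : 0 < D := by rw [hDdef]; linarith
  have hkey : A + A*D + B*D ≤ D*(D-1) := by
    rw [hDdef]; nlinarith
  refine ⟨c0/2, D, by positivity, by nlinarith, ?_⟩
  intro m hm
  have hm1 : 1 ≤ m := hm₀.trans hm
  have hmR : (1:ℝ) ≤ (m:ℝ) := by exact_mod_cast hm1
  have hmRpos : (0:ℝ) < (m:ℝ) := by linarith
  constructor
  · -- lower bound
    have main : ∀ k : ℕ, k ≤ m →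
        c0 * (k:ℝ) / (((2*m - k : ℕ):ℝ) * ((2*m : ℕ):ℝ)) ≤ lam (2*m - k) := by
      intro k
      induction k with
      | zero =>
        intro _
        simpa using (hpos (2*m - 0) (by omega)).le
      | succ k ih =>
        intro hk
        have hk' : k ≤ m := by omega
        have ihh := ih hk'
        have hjm0 : m₀ + 1 ≤ 2*m - k := by omega
        obtain ⟨hlow, -⟩ := hrec (2*m - k) hjm0
        have hidx : (2*m - k) - 1 = 2*m - (k+1) := by omega
        rw [hidx] at hlow
        have hcastj : ((2*m - k : ℕ):ℝ) = 2*(m:ℝ) - (k:ℝ) := by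
          push_cast [Nat.cast_sub (by omega : k ≤ 2*m)]; ring
        have hcastj' : ((2*m - (k+1) : ℕ):ℝ) = (2*(m:ℝ) - (k:ℝ)) - 1 := by
          push_cast [Nat.cast_sub (by omega : k+1 ≤ 2*m)]; ring
        have hcast2m : ((2*m : ℕ):ℝ) = 2*(m:ℝ) := by push_cast; ring
        set jR : ℝ := 2*(m:ℝ) - (k:ℝ) with hjR
        have hkR1 : (k:ℝ) + 1 ≤ (m:ℝ) := by exact_mod_cast Nat.succ_le_of_lt (by omega)
        have hkR0 : (0:ℝ) ≤ (k:ℝ) := Nat.cast_nonneg k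
        have hjpos : 0 < jR := by rw [hjR]; linarith
        set x : ℝ := c0*(k:ℝ)/(jR*(2*(m:ℝ))) with hxdef
        have hx0 : 0 ≤ x := by rw [hxdef]; positivity
        have hxlam : x ≤ lam (2*m - k) := by
          rw [hcastj, hcast2m] at ihh; exact ihh
        have hlamj : 0 < lam (2*m - k) := hpos _ (by omega)
        have hmono := hfrac_mono x (lam (2*m - k)) hx0 hxlam
        have hb' : (1:ℝ) ≤ 1 + b/jR := by
          have : 0 ≤ b/jR := by positivity
          linarith
        have hfnn : 0 ≤ lam (2*m - k) / (1 + lam (2*m - k)) := by positivity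
        have hcore := low_core a c0 (m:ℝ) (k:ℝ) jR hmR hkR0 hkR1 (by rw [hjR]; ring)
          hc0pos hc0a hc0_1
        calc c0 * ((k+1 : ℕ):ℝ) / (((2*m - (k+1) : ℕ):ℝ) * ((2*m : ℕ):ℝ))
            = c0*((k:ℝ)+1)/((jR-1)*(2*(m:ℝ))) := by
              rw [hcastj', hcast2m]; push_cast; ring_nf
          _ ≤ a/jR^2 + x/(1+x) := hcore
          _ ≤ a/jR^2 + lam (2*m - k) / (1 + lam (2*m - k)) := by linarith
          _ ≤ a/jR^2 + (1 + b/jR) * (lam (2*m - k) / (1 + lam (2*m - k))) := by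
              nlinarith [mul_le_mul_of_nonneg_right hb' hfnn]
          _ = a / ((2*m - k : ℕ):ℝ)^2
              + (1 + b/((2*m - k : ℕ):ℝ)) * (lam (2*m - k) / (1 + lam (2*m - k))) := by
              rw [hcastj]
          _ ≤ lam (2*m - (k+1)) := hlow
    have hmain := main m le_rfl
    have hidx : 2*m - m = m := by omega
    rw [hidx] at hmain
    have hcast2m : ((2*m : ℕ):ℝ) = 2*(m:ℝ) := by push_cast; ring
    have hcastm : ((m:ℕ):ℝ) = (m:ℝ) := rfl
    have heq : c0 * (m:ℝ) / (((m:ℕ):ℝ) * ((2*m : ℕ):ℝ)) = (c0/2) / (m:ℝ) := by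
      rw [hcast2m]
      field_simp
    rw [heq] at hmain
    exact hmain
  · -- upper bound
    have main : ∀ k : ℕ, k ≤ m → lam (2*m - k) ≤ D / ((k:ℝ)+1) := by
      intro k
      induction k with
      | zero =>
        intro _
        obtain ⟨-, hup⟩ := hrec (2*m+1) (by omega)
        have hidx : (2*m+1) - 1 = 2*m - 0 := by omega
        rw [hidx] at hup
        have hcast : ((2*m+1 : ℕ):ℝ) = 2*(m:ℝ)+1 := by push_cast; ring
        rw [hcast] at hup
        have hp : 0 < lam (2*m+1) := hpos _ (by omega)
        have hn1 : (1:ℝ) ≤ 2*(m:ℝ)+1 := by linarith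
        have hfr : lam (2*m+1) / (1 + lam (2*m+1)) ≤ 1 := by
          rw [div_le_one (by linarith)]; linarith
        have hfr0 : 0 ≤ lam (2*m+1) / (1 + lam (2*m+1)) := by positivity
        have hA1 : A / (2*(m:ℝ)+1)^2 ≤ A := by
          apply div_le_self hApos.le
          nlinarith
        have hB1 : B / (2*(m:ℝ)+1) ≤ B := div_le_self hBpos.le hn1
        have hB0 : 0 ≤ B / (2*(m:ℝ)+1) := by positivity
        have h2 : (1 + B/(2*(m:ℝ)+1)) * (lam (2*m+1) / (1 + lam (2*m+1))) ≤ (1 + B) * 1 := by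
          apply mul_le_mul (by linarith) hfr hfr0 (by linarith)
        have h3 : lam (2*m - 0) ≤ A + (1+B) := by nlinarith
        have h4 : D / ((Nat.cast 0 : ℝ)+1) = D := by norm_num
        rw [h4, hDdef]
        linarith
      | succ k ih =>
        intro hk
        have hk' : k ≤ m := by omega
        have ihh := ih hk'
        have hjm0 : m₀ + 1 ≤ 2*m - k := by omega
        obtain ⟨-, hup⟩ := hrec (2*m - k) hjm0
        have hidx : (2*m - k) - 1 = 2*m - (k+1) := by omega
        rw [hidx] at hup
        have hcastj : ((2*m - k : ℕ):ℝ) = 2*(m:ℝ) - (k:ℝ) := by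
          push_cast [Nat.cast_sub (by omega : k ≤ 2*m)]; ring
        set jR : ℝ := 2*(m:ℝ) - (k:ℝ) with hjR
        set u : ℝ := (k:ℝ) + 1 with hu
        have hkR1 : (k:ℝ) + 1 ≤ (m:ℝ) := by exact_mod_cast Nat.succ_le_of_lt (by omega)
        have hu1 : (1:ℝ) ≤ u := by
          rw [hu]; have := Nat.cast_nonneg (α := ℝ) k; linarith
        have huj : u + 1 ≤ jR := by rw [hu, hjR]; linarith
        have hjpos : 0 < jR := by rw [hjR]; linarith
        have hupos : 0 < u := by linarith
        have hlamj : 0 < lam (2*m - k) := hpos _ (by omega)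
        have hy : D / (u + D) = (D/u) / (1 + D/u) := by
          field_simp
        have hmono := hfrac_mono (lam (2*m - k)) (D/u) hlamj.le (by rw [hu]; exact ihh)
        have hBj : 0 < 1 + B/jR := by positivity
        have hcore := up_core A B D u jR hApos hBpos hDpos hkey hu1 huj
        calc lam (2*m - (k+1))
            ≤ A / ((2*m - k : ℕ):ℝ)^2
              + (1 + B/((2*m - k : ℕ):ℝ)) * (lam (2*m - k) / (1 + lam (2*m - k))) := hup
          _ = A/jR^2 + (1 + B/jR) * (lam (2*m - k) / (1 + lam (2*m - k))) := by rw [hcastj]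
          _ ≤ A/jR^2 + (1 + B/jR) * ((D/u)/(1 + D/u)) := by
              nlinarith [mul_le_mul_of_nonneg_left hmono hBj.le]
          _ = A/jR^2 + (1 + B/jR) * (D/(u+D)) := by rw [hy]
          _ ≤ D/(u+1) := hcore
          _ = D/(((k+1 : ℕ):ℝ)+1) := by rw [hu]; push_cast; ring
    have hmain := main m le_rfl
    have hidx : 2*m - m = m := by omega
    rw [hidx] at hmain
    calc lam m ≤ D / ((m:ℝ)+1) := hmain
      _ ≤ D / (m:ℝ) := by
          apply div_le_div_of_nonneg_left hDpos.le hmRpos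
          linarith
end
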